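/- arXiv:2603.08103 — 15 statements merged into one kernel-verified Lean document; each statement's English description precedes it below -/
import Mathlib

section
/- Let G be a commutative group with zero and let H be a submonoid of G with 0 ∈ H. Then the Riemann–Zariski space Zar(G|H) of all valuation submonoids of G containing H, endowed with the Zariski topology, is a spectral space. -/
open Set Topology

/-- A topological space is spectral if it is quasi-compact, `T0`, sober (every nonempty
irreducible closed subset has a unique generic point), and its quasi-compact open subsets
form a basis of the topology that is closed under finite intersections. -/
def IsSpectralSpace (X : Type*) [TopologicalSpace X] : Prop :=
  CompactSpace X ∧ T0Space X ∧ QuasiSober X ∧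
    TopologicalSpace.IsTopologicalBasis {U : Set X | IsOpen U ∧ IsCompact U} ∧
    ∀ U V : Set X, IsOpen U → IsCompact U → IsOpen V → IsCompact V → IsCompact (U ∩ V)

variable (G : Type*) [CommGroupWithZero G]

/-- A valuation submonoid of a commutative group with zero `G`: a submonoid `V` with
`0 ∈ V` such that for every nonzero `x ∈ G`, either `x ∈ V` or `x⁻¹ ∈ V`. -/
def IsValSubmonoid (V : Submonoid G) : Prop :=
  (0 : G) ∈ V ∧ ∀ x : G, x ≠ 0 → (x ∈ V ∨ x⁻¹ ∈ V)

/-- The Riemann–Zariski space `Zar(G|H)`: all valuation submonoids of `G` containing `H`. -/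
def Zar (H : Submonoid G) : Type _ :=
  {V : Submonoid G // IsValSubmonoid G V ∧ H ≤ V}

/-- The Zariski topology on `Zar(G|H)`, generated by the sets `B(x) = {S | x ∈ S}`. -/
instance (H : Submonoid G) : TopologicalSpace (Zar G H) :=
  TopologicalSpace.generateFrom {B : Set (Zar G H) | ∃ x : G, B = {S | x ∈ S.1}}

namespace ZarAux

variable {G} {H : Submonoid G}

lemma isOpen_B (x : G) : IsOpen {S : Zar G H | x ∈ S.1} :=
  TopologicalSpace.isOpen_generateFrom_of_mem ⟨x, rfl⟩

/-- Open sets of `Zar G H` are upward closed for the inclusion order. -/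
lemma isOpen_mono {U : Set (Zar G H)} (hU : IsOpen U) {V W : Zar G H}
    (hVW : ∀ x, x ∈ V.1 → x ∈ W.1) (hV : V ∈ U) : W ∈ U := by
  have hU' : TopologicalSpace.GenerateOpen
      {B : Set (Zar G H) | ∃ x : G, B = {S | x ∈ S.1}} U := hU
  clear hU
  induction hU' with
  | basic s hs => obtain ⟨x, rfl⟩ := hs; exact hVW x hV
  | univ => trivial
  | inter s t _ _ ihs iht => exact ⟨ihs hV.1, iht hV.2⟩
  | sUnion S _ ih => obtain ⟨s, hsS, hVs⟩ := hV; exact ⟨s, hsS, ih s hsS hVs⟩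

def P (H : Submonoid G) (f : G → Bool) : Prop :=
  f 1 = true ∧ (∀ x y : G, f x = true → f y = true → f (x * y) = true) ∧
    (∀ x ∈ H, f x = true) ∧ (∀ x : G, x ≠ 0 → f x = true ∨ f x⁻¹ = true)

def mkZar (h0 : (0 : G) ∈ H) (f : G → Bool) (h : P H f) : Zar G H :=
  ⟨{ carrier := {x | f x = true}
     mul_mem' := fun ha hb => h.2.1 _ _ ha hb
     one_mem' := h.1 },
   ⟨h.2.2.1 0 h0, h.2.2.2⟩, fun x hx => h.2.2.1 x hx⟩

open Classical in
noncomputable def psi (h0 : (0 : G) ∈ H) (f : G → Bool) : Zar G H :=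
  if h : P H f then mkZar h0 f h
  else ⟨⊤, ⟨Submonoid.mem_top _, fun x _ => Or.inl (Submonoid.mem_top _)⟩, le_top⟩

lemma psi_mem (h0 : (0 : G) ∈ H) {f : G → Bool} (h : P H f) (x : G) :
    x ∈ (psi h0 f).1 ↔ f x = true := by
  have hpsi : psi h0 f = mkZar h0 f h := by unfold psi; exact dif_pos h
  rw [hpsi]; exact Iff.rfl

/-- The fundamental compactness result: the set of points of `Zar G H` containing a fixed
subset `F` of `G` is compact, by comparison with the Boolean product topology. -/
lemma isCompact_setOf_subset (h0 : (0 : G) ∈ H) (F : Set G) :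
    IsCompact {V : Zar G H | ∀ x ∈ F, x ∈ V.1} := by
  classical
  set X : Set (G → Bool) := {f | P H f ∧ ∀ x ∈ F, f x = true} with hXdef
  have hc : ∀ x : G, Continuous fun f : G → Bool => f x := fun x => continuous_apply x
  have hsingle : ∀ x : G, IsClosed {f : G → Bool | f x = true} := fun x =>
    (isClosed_discrete {true}).preimage (hc x)
  have hXclosed : IsClosed X := by
    have hX : X = {f : G → Bool | f 1 = true} ∩
        ((⋂ x : G, ⋂ y : G, {f : G → Bool | f x = true → f y = true → f (x * y) = true}) ∩
         ((⋂ x ∈ H, {f : G → Bool | f x = true}) ∩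
          ((⋂ x ∈ {y : G | y ≠ 0}, {f : G → Bool | f x = true ∨ f x⁻¹ = true}) ∩
           (⋂ x ∈ F, {f : G → Bool | f x = true})))) := by
      ext f
      simp only [hXdef, P, mem_setOf_eq, mem_inter_iff, mem_iInter]
      tauto
    rw [hX]
    refine (hsingle 1).inter (IsClosed.inter ?_ (IsClosed.inter ?_ (IsClosed.inter ?_ ?_)))
    · refine isClosed_iInter fun x => isClosed_iInter fun y => ?_
      exact (isClosed_discrete {p : Bool × Bool × Bool | p.1 = true → p.2.1 = true →
        p.2.2 = true}).preimage ((hc x).prodMk ((hc y).prodMk (hc (x * y))))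
    · exact isClosed_biInter fun x _ => hsingle x
    · refine isClosed_biInter fun x _ => ?_
      exact (isClosed_discrete {p : Bool × Bool | p.1 = true ∨ p.2 = true}).preimage
        ((hc x).prodMk (hc x⁻¹))
    · exact isClosed_biInter fun x _ => hsingle x
  have hXcomp : IsCompact X := hXclosed.isCompact
  have hcont : ContinuousOn (psi h0) X := by
    rw [continuousOn_iff_continuous_restrict]
    refine continuous_generateFrom_iff.mpr ?_
    rintro s ⟨x, rfl⟩
    have he : X.restrict (psi h0) ⁻¹' {S : Zar G H | x ∈ S.1} =
        (fun f : X => f.1 x) ⁻¹' {true} := by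
      ext f
      simp only [restrict, mem_preimage, mem_setOf_eq, mem_singleton_iff]
      exact psi_mem h0 f.2.1 x
    have hop : IsOpen ((fun f : X => f.1 x) ⁻¹' {true}) := (isOpen_discrete ({true} : Set Bool)).preimage
      ((continuous_apply x).comp (continuous_subtype_val (p := (· ∈ X))))
    rw [← he] at hop
    exact hop
  have himg : psi h0 '' X = {V : Zar G H | ∀ x ∈ F, x ∈ V.1} := by
    ext V
    constructor
    · rintro ⟨f, hf, rfl⟩ x hx
      exact (psi_mem h0 hf.1 x).mpr (hf.2 x hx)
    · intro hV
      have hP : P H fun x => decide (x ∈ V.1) :=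
        ⟨decide_eq_true V.1.one_mem,
         fun x y hx hy => decide_eq_true (V.1.mul_mem (of_decide_eq_true hx)
           (of_decide_eq_true hy)),
         fun x hx => decide_eq_true (V.2.2 hx),
         fun x hx => (V.2.1.2 x hx).imp decide_eq_true decide_eq_true⟩
      refine ⟨fun x => decide (x ∈ V.1), ⟨hP, fun x hx => decide_eq_true (hV x hx)⟩, ?_⟩
      apply Subtype.ext
      apply SetLike.ext
      intro x
      rw [psi_mem h0 hP x]
      exact ⟨of_decide_eq_true, decide_eq_true⟩
  rw [← himg]
  exact hXcomp.image_of_continuousOn hcont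

lemma sInter_eq (f : Set (Set (Zar G H)))
    (hf : f ⊆ {B : Set (Zar G H) | ∃ x : G, B = {S | x ∈ S.1}}) :
    ⋂₀ f = {V : Zar G H | ∀ x ∈ {x : G | {S : Zar G H | x ∈ S.1} ∈ f}, x ∈ V.1} := by
  ext V
  simp only [mem_sInter, mem_setOf_eq]
  constructor
  · intro h x hx
    exact h _ hx
  · intro h s hs
    obtain ⟨x, rfl⟩ := hf hs
    exact h x hs

lemma isCompact_sInter (h0 : (0 : G) ∈ H) (f : Set (Set (Zar G H)))
    (hf : f ⊆ {B : Set (Zar G H) | ∃ x : G, B = {S | x ∈ S.1}}) :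
    IsCompact (⋂₀ f) := by
  rw [sInter_eq f hf]
  exact isCompact_setOf_subset h0 _

lemma basis : TopologicalSpace.IsTopologicalBasis
    ((fun f : Set (Set (Zar G H)) => ⋂₀ f) ''
      {f : Set (Set (Zar G H)) | f.Finite ∧ f ⊆ {B | ∃ x : G, B = {S | x ∈ S.1}}}) :=
  TopologicalSpace.isTopologicalBasis_of_subbasis rfl

lemma compact_open_basis (h0 : (0 : G) ∈ H) :
    TopologicalSpace.IsTopologicalBasis
      {U : Set (Zar G H) | IsOpen U ∧ IsCompact U} := by
  refine TopologicalSpace.isTopologicalBasis_of_isOpen_of_nhds (fun U hU => hU.1) ?_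
  intro a U ha hU
  obtain ⟨V, hV, haV, hVU⟩ := basis.exists_subset_of_mem_open ha hU
  obtain ⟨f, ⟨hfin, hsub⟩, rfl⟩ := hV
  refine ⟨⋂₀ f, ⟨?_, isCompact_sInter h0 f hsub⟩, haV, hVU⟩
  refine hfin.isOpen_sInter fun s hs => ?_
  obtain ⟨x, rfl⟩ := hsub hs
  exact isOpen_B x

/-- Every compact open subset is a finite union of open sets of the form
`{V | ∀ x ∈ F, x ∈ V}`. -/
lemma compact_open_decomp (h0 : (0 : G) ∈ H) {U : Set (Zar G H)} (hUo : IsOpen U)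
    (hUc : IsCompact U) :
    ∃ t : Finset {F : Set G // IsOpen {V : Zar G H | ∀ x ∈ F, x ∈ V.1} ∧
        {V : Zar G H | ∀ x ∈ F, x ∈ V.1} ⊆ U},
      U = ⋃ i ∈ t, {V : Zar G H | ∀ x ∈ i.1, x ∈ V.1} := by
  classical
  set I := {F : Set G // IsOpen {V : Zar G H | ∀ x ∈ F, x ∈ V.1} ∧
      {V : Zar G H | ∀ x ∈ F, x ∈ V.1} ⊆ U} with hI
  have hcover : U ⊆ ⋃ i : I, {V : Zar G H | ∀ x ∈ i.1, x ∈ V.1} := by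
    intro a ha
    obtain ⟨V, hV, haV, hVU⟩ := basis.exists_subset_of_mem_open ha hUo
    obtain ⟨f, ⟨hfin, hsub⟩, rfl⟩ := hV
    have hopen : IsOpen (⋂₀ f) := by
      refine hfin.isOpen_sInter fun s hs => ?_
      obtain ⟨x, rfl⟩ := hsub hs
      exact isOpen_B x
    dsimp only at haV hVU
    rw [sInter_eq f hsub] at hopen haV hVU
    exact mem_iUnion.mpr ⟨⟨_, hopen, hVU⟩, haV⟩
  obtain ⟨t, ht⟩ := hUc.elim_finite_subcover
    (fun i : I => {V : Zar G H | ∀ x ∈ i.1, x ∈ V.1}) (fun i => i.2.1) hcover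
  refine ⟨t, le_antisymm ht ?_⟩
  exact iUnion₂_subset fun i _ => i.2.2

lemma sober (h0 : (0 : G) ∈ H) : QuasiSober (Zar G H) := by
  constructor
  intro S hS hScl
  obtain ⟨W₀, hW₀⟩ := hS.nonempty
  have hmul : ∀ {a b : G}, a ∈ {x : G | ∃ W, W ∈ S ∧ x ∈ W.1} →
      b ∈ {x : G | ∃ W, W ∈ S ∧ x ∈ W.1} → a * b ∈ {x : G | ∃ W, W ∈ S ∧ x ∈ W.1} := by
    rintro a b ⟨Wa, hWa, ha⟩ ⟨Wb, hWb, hb⟩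
    obtain ⟨W, hWS, hWa', hWb'⟩ := hS.2 {V : Zar G H | a ∈ V.1} {V : Zar G H | b ∈ V.1}
      (isOpen_B a) (isOpen_B b) ⟨Wa, hWa, ha⟩ ⟨Wb, hWb, hb⟩
    exact ⟨W, hWS, W.1.mul_mem hWa' hWb'⟩
  set V₀ : Zar G H := ⟨{ carrier := {x : G | ∃ W, W ∈ S ∧ x ∈ W.1},
                         one_mem' := ⟨W₀, hW₀, W₀.1.one_mem⟩,
                         mul_mem' := hmul },
    ⟨⟨W₀, hW₀, W₀.2.1.1⟩, fun x hx =>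
        (W₀.2.1.2 x hx).imp (fun h => ⟨W₀, hW₀, h⟩) fun h => ⟨W₀, hW₀, h⟩⟩,
      fun x hx => ⟨W₀, hW₀, W₀.2.2 hx⟩⟩ with hV₀
  have hmem : ∀ x : G, x ∈ V₀.1 ↔ ∃ W, W ∈ S ∧ x ∈ W.1 := fun x => Iff.rfl
  -- finite intersections of opens meeting `S` meet `S`
  have key : ∀ g : Set (Set (Zar G H)), g.Finite → (∀ s ∈ g, IsOpen s) →
      (∀ s ∈ g, (S ∩ s).Nonempty) → (S ∩ ⋂₀ g).Nonempty := by
    intro g hg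
    refine Set.Finite.induction_on
      (motive := fun g _ => (∀ s ∈ g, IsOpen s) → (∀ s ∈ g, (S ∩ s).Nonempty) →
        (S ∩ ⋂₀ g).Nonempty) g hg (fun _ _ => by simpa using hS.nonempty) ?_
    intro a s ha hfin ih hop hne
    · have h1 := ih (fun t ht => hop t (mem_insert_of_mem _ ht))
        (fun t ht => hne t (mem_insert_of_mem _ ht))
      have h2 := hS.2 a (⋂₀ s) (hop a (mem_insert _ _))
        (hfin.isOpen_sInter fun t ht => hop t (mem_insert_of_mem _ ht))
        (hne a (mem_insert _ _)) h1
      rwa [sInter_insert]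
  have hV₀S : V₀ ∈ S := by
    by_contra hc
    obtain ⟨V, hV, haV, hVU⟩ :=
      basis.exists_subset_of_mem_open (show V₀ ∈ Sᶜ from hc) hScl.isOpen_compl
    obtain ⟨f, ⟨hfin, hsub⟩, rfl⟩ := hV
    have hne : ∀ s ∈ f, (S ∩ s).Nonempty := by
      intro s hs
      obtain ⟨x, rfl⟩ := hsub hs
      obtain ⟨W, hWS, hxW⟩ := (hmem x).mp (haV _ hs)
      exact ⟨W, hWS, hxW⟩
    obtain ⟨W, hWS, hWf⟩ := key f hfin
      (fun s hs => by obtain ⟨x, rfl⟩ := hsub hs; exact isOpen_B x) hne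
    exact hVU hWf hWS
  refine ⟨V₀, ?_⟩
  rw [isGenericPoint_def]
  apply subset_antisymm
  · exact closure_minimal (singleton_subset_iff.mpr hV₀S) hScl
  · intro W hW
    rw [mem_closure_iff]
    intro o ho hWo
    exact ⟨V₀, isOpen_mono ho (fun x hx => ⟨W, hW, hx⟩) hWo, rfl⟩

end ZarAux

theorem zar_is_spectral (H : Submonoid G) (h0 : (0 : G) ∈ H) :
    IsSpectralSpace (Zar G H) := by
  refine ⟨⟨by simpa using ZarAux.isCompact_setOf_subset h0 (∅ : Set G)⟩, ?_,
    ZarAux.sober h0, ZarAux.compact_open_basis h0, ?_⟩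
  · rw [t0Space_iff_inseparable]
    intro V W h
    apply Subtype.ext
    apply SetLike.ext
    intro x
    constructor
    · intro hx
      exact (h.mem_open_iff (ZarAux.isOpen_B x)).mp hx
    · intro hx
      exact (h.mem_open_iff (ZarAux.isOpen_B x)).mpr hx
  · intro U V hUo hUc hVo hVc
    obtain ⟨t, ht⟩ := ZarAux.compact_open_decomp h0 hUo hUc
    obtain ⟨t', ht'⟩ := ZarAux.compact_open_decomp h0 hVo hVc
    rw [ht, ht', iUnion₂_inter]
    refine t.isCompact_biUnion fun i _ => ?_
    rw [inter_iUnion₂]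
    refine t'.isCompact_biUnion fun j _ => ?_
    have he : {V : Zar G H | ∀ x ∈ i.1, x ∈ V.1} ∩ {V : Zar G H | ∀ x ∈ j.1, x ∈ V.1}
        = {V : Zar G H | ∀ x ∈ i.1 ∪ j.1, x ∈ V.1} := by
      ext W
      simp only [mem_inter_iff, mem_setOf_eq, mem_union]
      exact ⟨fun h x hx => hx.elim (h.1 x) (h.2 x),
        fun h => ⟨fun x hx => h x (Or.inl hx), fun x hx => h x (Or.inr hx)⟩⟩
    rw [he]
    exact ZarAux.isCompact_setOf_subset h0 _
end

section
/- Let 𝒰 be an ultrafilter on Zar(G|H). Then the set H_𝒰 := {x ∈ G : B(x) ∈ 𝒰} is a valuation submonoid of G containing H; in particular H_𝒰 ∈ Zar(G|H), and for every x ∈ G one has H_𝒰 ∈ B(x) if and only if B(x) ∈ 𝒰. -/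
open Set Topology

variable (G : Type*) [CommGroupWithZero G]

theorem ultrafilter_limit_mem_zar (H : Submonoid G) (h0 : (0 : G) ∈ H)
    (𝒰 : Ultrafilter (Zar G H)) :
    ∃ V : Submonoid G,
      (V : Set G) = {x : G | {S : Zar G H | x ∈ S.1} ∈ 𝒰} ∧
      IsValSubmonoid G V ∧ H ≤ V ∧
      ∃ W : Zar G H, W.1 = V ∧
        ∀ x : G, (x ∈ W.1 ↔ {S : Zar G H | x ∈ S.1} ∈ 𝒰) := by
  set V : Submonoid G :=
    { carrier := {x : G | {S : Zar G H | x ∈ S.1} ∈ 𝒰}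
      one_mem' := by
        have : {S : Zar G H | (1 : G) ∈ S.1} = Set.univ := by
          ext S; simp [S.1.one_mem]
        show {S : Zar G H | (1:G) ∈ S.1} ∈ 𝒰; rw [this]; exact Filter.univ_mem
      mul_mem' := by
        intro a b ha hb
        exact 𝒰.toFilter.mem_of_superset (Filter.inter_mem ha hb)
          (fun S hS => S.1.mul_mem hS.1 hS.2) } with hV
  have hzero : (0 : G) ∈ V := by
    have : {S : Zar G H | (0 : G) ∈ S.1} = Set.univ := by
      ext S; simp [S.2.1.1]
    show {S : Zar G H | (0 : G) ∈ S.1} ∈ 𝒰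
    rw [this]; exact Filter.univ_mem
  have hval : IsValSubmonoid G V := by
    refine ⟨hzero, fun x hx => ?_⟩
    rcases 𝒰.mem_or_compl_mem {S : Zar G H | x ∈ S.1} with h | h
    · exact Or.inl h
    · refine Or.inr (𝒰.toFilter.mem_of_superset h fun S hS => ?_)
      rcases S.2.1.2 x hx with h' | h'
      · exact absurd h' hS
      · exact h'
  have hH : H ≤ V := by
    intro h hh
    show {S : Zar G H | h ∈ S.1} ∈ 𝒰
    have : {S : Zar G H | h ∈ S.1} = Set.univ := by
      ext S; simp [S.2.2 hh]
    rw [this]; exact Filter.univ_mem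
  exact ⟨V, rfl, hval, hH, ⟨V, hval, hH⟩, rfl, fun x => Iff.rfl⟩
end

section
/- Let H be a cancellative commutative monoid with zero (1 ≠ 0) and let G be its quotient groupoid. For every S ∈ Zar(G|H), the set δ(S) := m_S ∩ H is a prime s-ideal of H, and the resulting domination map δ : Zar(G|H) → s-spec(H) is continuous and surjective, where both spaces carry their Zariski topologies. -/
open Set Topology

variable (G : Type*) [CommGroupWithZero G]

/-- `G` is the quotient groupoid of `H`: every element of `G` has the form `a * b⁻¹`
with `a, b ∈ H`, `b ≠ 0`. -/
def IsQuotientGroupoid (H : Submonoid G) : Prop :=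
  ∀ g : G, ∃ a ∈ H, ∃ b ∈ H, b ≠ 0 ∧ g = a * b⁻¹

/-- The set of non-invertible elements of a submonoid `S` of `G`. -/
def mIdeal (S : Submonoid G) : Set G := {x : G | x ∈ S ∧ ¬∃ y ∈ S, x * y = 1}

/-- A prime `s`-ideal of `H`: a proper subset `P ⊊ H` with `0 ∈ P`, `P·H ⊆ P`, and
`a * b ∈ P` implies `a ∈ P` or `b ∈ P` for all `a, b ∈ H`. -/
def IsPrimeSIdeal (H : Submonoid G) (P : Set G) : Prop :=
  P ⊆ (H : Set G) ∧ P ≠ (H : Set G) ∧ (0 : G) ∈ P ∧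
    (∀ p ∈ P, ∀ h ∈ H, p * h ∈ P) ∧
    (∀ a ∈ H, ∀ b ∈ H, a * b ∈ P → a ∈ P ∨ b ∈ P)

/-- The prime `s`-spectrum of `H`. -/
def sSpec (H : Submonoid G) : Type _ :=
  {P : Set G // IsPrimeSIdeal G H P}

/-- The Zariski topology on `s`-spec(`H`), generated by the sets `D_s(f) = {P | f ∉ P}`. -/
instance (H : Submonoid G) : TopologicalSpace (sSpec G H) :=
  TopologicalSpace.generateFrom
    {D : Set (sSpec G H) | ∃ f ∈ H, D = {P | f ∉ P.1}}

section Aux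

variable {G} {H : Submonoid G}

/-- Part 1: `δ(S)` is a prime s-ideal. -/
theorem mIdeal_isPrimeSIdeal (h0 : (0 : G) ∈ H) (S : Zar G H) :
    IsPrimeSIdeal G H (mIdeal G S.1 ∩ (H : Set G)) := by
  obtain ⟨⟨hS0, hSval⟩, hHS⟩ := S.2
  refine ⟨Set.inter_subset_right, ?_, ?_, ?_, ?_⟩
  · intro h
    have h1 : (1 : G) ∈ mIdeal G S.1 ∩ (H : Set G) := by rw [h]; exact H.one_mem
    exact h1.1.2 ⟨1, S.1.one_mem, one_mul 1⟩
  · exact ⟨⟨hS0, fun ⟨y, _, hy⟩ => one_ne_zero ((zero_mul y) ▸ hy.symm)⟩, h0⟩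
  · rintro p ⟨⟨hpS, hpinv⟩, hpH⟩ h hh
    refine ⟨⟨S.1.mul_mem hpS (hHS hh), ?_⟩, H.mul_mem hpH hh⟩
    rintro ⟨y, hyS, hy⟩
    exact hpinv ⟨h * y, S.1.mul_mem (hHS hh) hyS, by rwa [← mul_assoc]⟩
  · rintro a ha b hb ⟨⟨_, habinv⟩, _⟩
    by_contra hcon
    push_neg at hcon
    obtain ⟨h1, h2⟩ := hcon
    have ha' : ∃ y ∈ S.1, a * y = 1 := by
      by_contra hy; exact h1 ⟨⟨hHS ha, hy⟩, ha⟩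
    have hb' : ∃ y ∈ S.1, b * y = 1 := by
      by_contra hy; exact h2 ⟨⟨hHS hb, hy⟩, hb⟩
    obtain ⟨y, hyS, hy⟩ := ha'
    obtain ⟨z, hzS, hz⟩ := hb'
    refine habinv ⟨y * z, S.1.mul_mem hyS hzS, ?_⟩
    rw [mul_mul_mul_comm, hy, hz, one_mul]

/-- The submonoid generated by `V` and `x`. -/
def extMon (V : Submonoid G) (x : G) : Submonoid G where
  carrier := {g : G | ∃ v ∈ V, ∃ n : ℕ, g = v * x ^ n}
  one_mem' := ⟨1, V.one_mem, 0, by simp⟩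
  mul_mem' := by
    rintro a b ⟨v, hv, n, rfl⟩ ⟨w, hw, m, rfl⟩
    exact ⟨v * w, V.mul_mem hv hw, n + m, by rw [pow_add, mul_mul_mul_comm]⟩

theorem le_extMon (V : Submonoid G) (x : G) : V ≤ extMon V x :=
  fun v hv => ⟨v, hv, 0, by simp⟩

theorem mem_extMon (V : Submonoid G) (x : G) : x ∈ extMon V x :=
  ⟨1, V.one_mem, 1, by simp⟩

/-- Surjectivity core: every prime s-ideal is dominated by some valuation submonoid. -/
theorem exists_zar_of_prime (h0 : (0 : G) ∈ H) (P : Set G)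
    (hP : IsPrimeSIdeal G H P) :
    ∃ S : Zar G H, mIdeal G S.1 ∩ (H : Set G) = P := by
  obtain ⟨hPH, hPne, hP0, hPid, hPpr⟩ := hP
  have h1P : (1 : G) ∉ P := by
    intro h
    exact hPne (Set.Subset.antisymm hPH (fun x hx => by simpa using hPid 1 h x hx))
  -- the localization of H away from P
  set S0 : Submonoid G :=
    { carrier := {g : G | ∃ a ∈ H, ∃ t ∈ H, t ∉ P ∧ g = a * t⁻¹}
      one_mem' := ⟨1, H.one_mem, 1, H.one_mem, h1P, by simp⟩
      mul_mem' := by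
        rintro x y ⟨a, ha, t, ht, htP, rfl⟩ ⟨b, hb, u, hu, huP, rfl⟩
        refine ⟨a * b, H.mul_mem ha hb, t * u, H.mul_mem ht hu, ?_, ?_⟩
        · intro h
          rcases hPpr t ht u hu h with h | h
          · exact htP h
          · exact huP h
        · rw [mul_inv, mul_mul_mul_comm] } with hS0def
  have hHS0 : H ≤ S0 := fun h hh => ⟨h, hh, 1, H.one_mem, h1P, by simp⟩
  -- the condition for Zorn's lemma
  set s : Set (Submonoid G) :=
    {V : Submonoid G | S0 ≤ V ∧ ∀ p ∈ P, p ≠ 0 → p⁻¹ ∉ V} with hsdef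
  have hS0s : S0 ∈ s := by
    refine ⟨le_rfl, ?_⟩
    rintro p hp hp0 ⟨a, ha, t, ht, htP, heq⟩
    have ht0 : t ≠ 0 := fun h => htP (h ▸ hP0)
    have : t = p * a := by
      calc t = p * p⁻¹ * t := by rw [mul_inv_cancel₀ hp0, one_mul]
        _ = p * (p⁻¹ * t) := mul_assoc _ _ _
        _ = p * (a * t⁻¹ * t) := by rw [heq]
        _ = p * (a * (t⁻¹ * t)) := by rw [mul_assoc]
        _ = p * a := by rw [inv_mul_cancel₀ ht0, mul_one]
    exact htP (this ▸ hPid p hp a ha)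
  obtain ⟨V, hS0V, hVmax⟩ := zorn_le_nonempty₀ s
    (fun c hcs hc y hy => by
      refine ⟨sSup c, ?_, fun z hz => le_sSup hz⟩
      have hcne : c.Nonempty := ⟨y, hy⟩
      have hdir : DirectedOn (· ≤ ·) c := hc.directedOn
      constructor
      · exact le_trans (hcs hy).1 (le_sSup hy)
      · intro p hp hp0 hmem
        rw [← SetLike.mem_coe, Submonoid.coe_sSup_of_directedOn hcne hdir] at hmem
        simp only [Set.mem_iUnion] at hmem
        obtain ⟨W, hWc, hpW⟩ := hmem
        exact (hcs hWc).2 p hp hp0 hpW) S0 hS0s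
  have hVcond := hVmax.1
  -- V is a valuation submonoid
  have hHV : H ≤ V := le_trans hHS0 hS0V
  have hval : IsValSubmonoid G V := by
    refine ⟨hHV h0, ?_⟩
    intro x hx0
    by_contra hcon
    push_neg at hcon
    obtain ⟨hx, hx'⟩ := hcon
    -- neither x nor x⁻¹ is in V; extend V by x and by x⁻¹ and use maximality
    have hnot : ∀ z : G, z ∉ V → ∃ p ∈ P, p ≠ 0 ∧ ∃ v ∈ V, ∃ n : ℕ, n ≠ 0 ∧ p⁻¹ = v * z ^ n := by
      intro z hz
      have hne : ¬ (extMon V z ∈ s) := by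
        intro hmem
        exact hz (hVmax.2 hmem (le_extMon V z) (mem_extMon V z))
      rw [hsdef, Set.mem_setOf_eq] at hne
      push_neg at hne
      have hle : S0 ≤ extMon V z := le_trans hS0V (le_extMon V z)
      obtain ⟨p, hp, hp0, hpinv⟩ := hne hle
      obtain ⟨v, hv, n, hpe⟩ := hpinv
      refine ⟨p, hp, hp0, v, hv, n, ?_, hpe⟩
      rintro rfl
      simp only [pow_zero, mul_one] at hpe
      exact hVcond.2 p hp hp0 (hpe ▸ hv)
    obtain ⟨p, hp, hp0, v, hv, n, hn, hpe⟩ := hnot x hx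
    obtain ⟨q, hq, hq0, w, hw, m, hm, hqe⟩ := hnot x⁻¹ hx'
    -- r = p^m * q^n is in P, nonzero, yet r⁻¹ ∈ V: contradiction
    have hpHm : p ∈ H := hPH hp
    have hqHm : q ∈ H := hPH hq
    have hrP : p ^ m * q ^ n ∈ P := by
      obtain ⟨m', rfl⟩ : ∃ m', m = m' + 1 := ⟨m - 1, (Nat.succ_pred_eq_of_pos (Nat.pos_of_ne_zero hm)).symm⟩
      have : p ^ (m' + 1) * q ^ n = p * (p ^ m' * q ^ n) := by
        rw [pow_succ, mul_comm (p ^ m') p, mul_assoc]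
      rw [this]
      exact hPid p hp _ (H.mul_mem (H.pow_mem hpHm m') (H.pow_mem hqHm n))
    have hr0 : p ^ m * q ^ n ≠ 0 :=
      mul_ne_zero (pow_ne_zero m hp0) (pow_ne_zero n hq0)
    have key : (v * x ^ n) ^ m * (w * x⁻¹ ^ m) ^ n = v ^ m * w ^ n := by
      rw [mul_pow, mul_pow, mul_mul_mul_comm, ← pow_mul, ← pow_mul, inv_pow,
        mul_comm m n, mul_inv_cancel₀ (pow_ne_zero (n * m) hx0), mul_one]
    have hrinv : (p ^ m * q ^ n)⁻¹ = v ^ m * w ^ n := by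
      rw [mul_inv, ← inv_pow, ← inv_pow, hpe, hqe, key]
    exact hVcond.2 _ hrP hr0 (hrinv ▸ V.mul_mem (V.pow_mem hv m) (V.pow_mem hw n))
  refine ⟨⟨V, hval, hHV⟩, ?_⟩
  ext h
  simp only [Set.mem_inter_iff, mIdeal, Set.mem_setOf_eq, SetLike.mem_coe]
  constructor
  · rintro ⟨⟨hhV, hhinv⟩, hhH⟩
    by_contra hhP
    have hh0 : h ≠ 0 := fun h' => hhP (h' ▸ hP0)
    refine hhinv ⟨h⁻¹, ?_, mul_inv_cancel₀ hh0⟩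
    exact hS0V ⟨1, H.one_mem, h, hhH, hhP, (one_mul _).symm⟩
  · intro hhP
    refine ⟨⟨hHV (hPH hhP), ?_⟩, hPH hhP⟩
    rintro ⟨y, hyV, hy⟩
    have hh0 : h ≠ 0 := fun h' => by simp [h'] at hy
    have : y = h⁻¹ := by
      field_simp
      rw [mul_comm] at hy
      exact hy
    exact hVcond.2 h hhP hh0 (this ▸ hyV)

theorem notMem_mIdeal_iff {f : G} (hf : f ∈ H) (hf0 : f ≠ 0) (S : Zar G H) :
    f ∉ mIdeal G S.1 ∩ (H : Set G) ↔ f⁻¹ ∈ S.1 := by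
  constructor
  · intro h
    by_contra hinv
    apply h
    refine ⟨⟨S.2.2 hf, ?_⟩, hf⟩
    rintro ⟨y, hyV, hy⟩
    have : y = f⁻¹ := by rw [← one_mul y, ← inv_mul_cancel₀ hf0, mul_assoc, hy, mul_one]
    exact hinv (this ▸ hyV)
  · intro h hmem
    exact hmem.1.2 ⟨f⁻¹, h, mul_inv_cancel₀ hf0⟩

end Aux

theorem domination_map_continuous_surjective (H : Submonoid G) (h0 : (0 : G) ∈ H)
    (hq : IsQuotientGroupoid G H) :
    (∀ S : Zar G H, IsPrimeSIdeal G H (mIdeal G S.1 ∩ (H : Set G))) ∧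
    ∃ δ : Zar G H → sSpec G H,
      (∀ S : Zar G H, (δ S).1 = mIdeal G S.1 ∩ (H : Set G)) ∧
      Continuous δ ∧ Function.Surjective δ := by
  refine ⟨fun S => mIdeal_isPrimeSIdeal h0 S, ?_⟩
  refine ⟨fun S => ⟨mIdeal G S.1 ∩ (H : Set G), mIdeal_isPrimeSIdeal h0 S⟩, fun S => rfl, ?_, ?_⟩
  · -- continuity
    apply continuous_generateFrom_iff.mpr
    rintro D ⟨f, hf, rfl⟩
    by_cases hf0 : f = 0
    · convert isOpen_empty
      ext S
      simp only [Set.mem_preimage, Set.mem_empty_iff_false, iff_false]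
      intro h
      subst hf0
      exact h ⟨⟨S.2.1.1, fun ⟨y, _, hy⟩ => one_ne_zero ((zero_mul y) ▸ hy.symm)⟩, h0⟩
    · have : (fun S : Zar G H => (⟨mIdeal G S.1 ∩ (H : Set G), mIdeal_isPrimeSIdeal h0 S⟩ : sSpec G H)) ⁻¹'
          {P : sSpec G H | f ∉ P.1} = {S : Zar G H | f⁻¹ ∈ S.1} := by
        ext S
        simp only [Set.mem_preimage, Set.mem_setOf_eq]
        exact notMem_mIdeal_iff hf hf0 S
      refine (congrArg IsOpen this).mpr ?_
      exact TopologicalSpace.isOpen_generateFrom_of_mem ⟨f⁻¹, rfl⟩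
  · -- surjectivity
    rintro ⟨P, hP⟩
    obtain ⟨S, hS⟩ := exists_zar_of_prime h0 P hP
    exact ⟨S, Subtype.ext hS⟩
end

section
/- Let H be a cancellative commutative monoid with zero (1 ≠ 0) with quotient groupoid G, and assume H is an s-Prüfer monoid. Then the domination map δ : Zar(G|H) → s-spec(H), δ(S) = m_S ∩ H, is a homeomorphism, where both spaces carry their Zariski topologies. -/
open Set Topology

variable (G : Type*) [CommGroupWithZero G]

/-- A fractional `s`-ideal of `H`: a subset `I ⊆ G` with `0 ∈ I`, `I·H = I`, and
`c·I ⊆ H` for some nonzero `c ∈ H`. -/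
def IsFractionalSIdeal (H : Submonoid G) (I : Set G) : Prop :=
  (0 : G) ∈ I ∧ Set.image2 (· * ·) I (H : Set G) = I ∧
    ∃ c ∈ H, c ≠ 0 ∧ (fun x => c * x) '' I ⊆ (H : Set G)

/-- `I` is `s`-finitely generated: `I = E·H ∪ {0}` for some finite `E ⊆ G`. -/
def IsSFinitelyGenerated (H : Submonoid G) (I : Set G) : Prop :=
  ∃ E : Set G, E.Finite ∧ I = Set.image2 (· * ·) E (H : Set G) ∪ {0}

/-- `I` is `s`-invertible: `I·J = H` for some fractional `s`-ideal `J`. -/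
def IsSInvertible (H : Submonoid G) (I : Set G) : Prop :=
  ∃ J : Set G, IsFractionalSIdeal G H J ∧ Set.image2 (· * ·) I J = (H : Set G)

/-- `H` is an `s`-Prüfer monoid: every `s`-finitely generated fractional `s`-ideal
other than `{0}` is `s`-invertible. -/
def IsSPrufer (H : Submonoid G) : Prop :=
  ∀ I : Set G, IsFractionalSIdeal G H I → IsSFinitelyGenerated G H I → I ≠ {0} →
    IsSInvertible G H I

namespace SPruferAux

variable {G : Type*} [CommGroupWithZero G]

/-- The "localization" of `H` at a set `P`: elements of the form `a * b⁻¹` with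
`a, b ∈ H`, `b ∉ P`. -/
def locSet (H : Submonoid G) (P : Set G) : Set G :=
  {x | ∃ a ∈ H, ∃ b ∈ H, b ∉ P ∧ x = a * b⁻¹}

theorem prime_one_not_mem {H : Submonoid G} {P : Set G} (hP : IsPrimeSIdeal G H P) :
    (1 : G) ∉ P := by
  intro h1
  exact hP.2.1 (Set.Subset.antisymm hP.1 fun h hh => by simpa using hP.2.2.2.1 1 h1 h hh)

theorem prime_ne_zero {H : Submonoid G} {P : Set G} (hP : IsPrimeSIdeal G H P)
    {b : G} (hb : b ∉ P) : b ≠ 0 := fun h => hb (h ▸ hP.2.2.1)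

theorem prufer_key {H : Submonoid G} (h0 : (0 : G) ∈ H) (hpruf : IsSPrufer G H)
    {a b : G} (ha : a ∈ H) (hb : b ∈ H) (ha0 : a ≠ 0) :
    ∃ j : G, j ≠ 0 ∧ j * a ∈ H ∧ j * b ∈ H ∧
      ((∃ h ∈ H, (j * a) * h = 1) ∨ (∃ h ∈ H, (j * b) * h = 1)) := by
  set I : Set G := Set.image2 (· * ·) {a, b} (H : Set G) ∪ {0} with hIdef
  have haI : a ∈ I := Or.inl ⟨a, Or.inl rfl, 1, H.one_mem, by simp⟩
  have hbI : b ∈ I := Or.inl ⟨b, Or.inr rfl, 1, H.one_mem, by simp⟩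
  have hIH : ∀ x ∈ I, x ∈ (H : Set G) := by
    rintro x (hx | rfl)
    · obtain ⟨e, he, h, hh, rfl⟩ := hx
      rcases he with rfl | rfl
      exacts [H.mul_mem ha hh, H.mul_mem hb hh]
    · exact h0
  have hfrac : IsFractionalSIdeal G H I := by
    refine ⟨Or.inr rfl, ?_, 1, H.one_mem, one_ne_zero, ?_⟩
    · ext x
      constructor
      · rintro ⟨i, hi, h, hh, rfl⟩
        rcases hi with ⟨e, he, h', hh', rfl⟩ | rfl
        · exact Or.inl ⟨e, he, h' * h, H.mul_mem hh' hh, by simp [mul_assoc]⟩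
        · exact Or.inr (by simp)
      · intro hx
        exact ⟨x, hx, 1, H.one_mem, by simp⟩
    · rintro y ⟨x, hx, rfl⟩
      simpa using hIH x hx
  have hfg : IsSFinitelyGenerated G H I :=
    ⟨{a, b}, (Set.finite_singleton b).insert a, rfl⟩
  have hne : I ≠ {0} := by
    intro h
    rw [h] at haI
    simp only [Set.mem_singleton_iff] at haI
    exact ha0 haI
  obtain ⟨J, hJ, hIJ⟩ := hpruf I hfrac hfg hne
  have h1 : (1 : G) ∈ Set.image2 (· * ·) I J := hIJ ▸ H.one_mem
  obtain ⟨i, hi, j, hj, hij⟩ := h1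
  have hj0 : j ≠ 0 := by rintro rfl; simp at hij
  have hja : j * a ∈ H := by
    have : a * j ∈ Set.image2 (· * ·) I J := ⟨a, haI, j, hj, rfl⟩
    rw [hIJ] at this
    rwa [mul_comm]
  have hjb : j * b ∈ H := by
    have : b * j ∈ Set.image2 (· * ·) I J := ⟨b, hbI, j, hj, rfl⟩
    rw [hIJ] at this
    rwa [mul_comm]
  refine ⟨j, hj0, hja, hjb, ?_⟩
  rcases hi with ⟨e, he, h, hh, rfl⟩ | rfl
  · rcases he with rfl | rfl
    · refine Or.inl ⟨h, hh, ?_⟩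
      calc (j * e) * h = e * h * j := by simp [mul_comm, mul_left_comm, mul_assoc]
        _ = 1 := hij
    · refine Or.inr ⟨h, hh, ?_⟩
      calc (j * e) * h = e * h * j := by simp [mul_comm, mul_left_comm, mul_assoc]
        _ = 1 := hij
  · simp at hij

theorem mem_overmonoid_iff {H S : Submonoid G} (h0 : (0 : G) ∈ H)
    (hq : IsQuotientGroupoid G H) (hpruf : IsSPrufer G H) (hHS : H ≤ S) (x : G) :
    x ∈ S ↔ x ∈ locSet H (mIdeal G S ∩ (H : Set G)) := by
  have hcond : ∀ b ∈ H, (b ∉ mIdeal G S ∩ (H : Set G) ↔ ∃ y ∈ S, b * y = 1) := by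
    intro b hb
    constructor
    · intro hnot
      by_contra hy
      exact hnot ⟨⟨hHS hb, hy⟩, hb⟩
    · rintro ⟨y, hy, hby⟩ ⟨⟨-, hnu⟩, -⟩
      exact hnu ⟨y, hy, hby⟩
  constructor
  · intro hx
    obtain ⟨a, ha, b, hb, hb0, rfl⟩ := hq x
    by_cases ha0 : a = 0
    · exact ⟨0, h0, 1, H.one_mem,
        (hcond 1 H.one_mem).2 ⟨1, S.one_mem, mul_one 1⟩, by simp [ha0]⟩
    · obtain ⟨j, hj0, hja, hjb, hcase⟩ := prufer_key h0 hpruf ha hb ha0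
      have heq : a * b⁻¹ = (j * a) * (j * b)⁻¹ := by
        rw [mul_inv, mul_mul_mul_comm, mul_inv_cancel₀ hj0, one_mul]
      rcases hcase with ⟨h, hh, hh1⟩ | ⟨h, hh, hh1⟩
      · refine ⟨j * a, hja, j * b, hjb, (hcond _ hjb).2 ⟨h * (a * b⁻¹),
          S.mul_mem (hHS hh) hx, ?_⟩, heq⟩
        calc (j * b) * (h * (a * b⁻¹)) = ((j * a) * h) * (b * b⁻¹) := by
              simp [mul_comm, mul_left_comm, mul_assoc]
          _ = 1 := by rw [hh1, mul_inv_cancel₀ hb0, one_mul]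
      · exact ⟨j * a, hja, j * b, hjb, (hcond _ hjb).2 ⟨h, hHS hh, hh1⟩, heq⟩
  · rintro ⟨a, ha, b, hb, hbn, rfl⟩
    obtain ⟨y, hy, hby⟩ := (hcond b hb).1 hbn
    have : b⁻¹ = y := inv_eq_of_mul_eq_one_right hby
    exact S.mul_mem (hHS ha) (this ▸ hy)

/-- The localization of `H` at a prime `s`-ideal `P`, as a submonoid. -/
def locSubmonoid (H : Submonoid G) (P : Set G) (hP : IsPrimeSIdeal G H P) : Submonoid G where
  carrier := locSet H P
  one_mem' := ⟨1, H.one_mem, 1, H.one_mem, prime_one_not_mem hP, by simp⟩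
  mul_mem' := by
    rintro x y ⟨a, ha, b, hb, hbP, rfl⟩ ⟨c, hc, d, hd, hdP, rfl⟩
    refine ⟨a * c, H.mul_mem ha hc, b * d, H.mul_mem hb hd, ?_, ?_⟩
    · intro hbd
      rcases hP.2.2.2.2 b hb d hd hbd with h | h
      exacts [hbP h, hdP h]
    · rw [mul_inv, mul_mul_mul_comm]

theorem loc_spec {H : Submonoid G} {P : Set G} (hP : IsPrimeSIdeal G H P)
    (h0 : (0 : G) ∈ H) (hq : IsQuotientGroupoid G H) (hpruf : IsSPrufer G H) :
    IsValSubmonoid G (locSubmonoid H P hP) ∧ H ≤ locSubmonoid H P hP := by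
  have hle : H ≤ locSubmonoid H P hP := fun h hh =>
    ⟨h, hh, 1, H.one_mem, prime_one_not_mem hP, by simp⟩
  refine ⟨⟨⟨0, h0, 1, H.one_mem, prime_one_not_mem hP, by simp⟩, ?_⟩, hle⟩
  intro x hx0
  obtain ⟨a, ha, b, hb, hb0, rfl⟩ := hq x
  have ha0 : a ≠ 0 := by rintro rfl; simp at hx0
  obtain ⟨j, hj0, hja, hjb, hcase⟩ := prufer_key h0 hpruf ha hb ha0
  rcases hcase with ⟨h, hh, hh1⟩ | ⟨h, hh, hh1⟩
  · right
    refine ⟨j * b, hjb, j * a, hja,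
      fun hmem => prime_one_not_mem hP (hh1 ▸ hP.2.2.2.1 _ hmem h hh), ?_⟩
    rw [mul_inv, inv_inv, mul_inv, mul_mul_mul_comm, mul_inv_cancel₀ hj0, one_mul,
      mul_comm]
  · left
    exact ⟨j * a, hja, j * b, hjb,
      fun hmem => prime_one_not_mem hP (hh1 ▸ hP.2.2.2.1 _ hmem h hh),
      by rw [mul_inv, mul_mul_mul_comm, mul_inv_cancel₀ hj0, one_mul]⟩

theorem delta_isPrime {H S : Submonoid G} (h0 : (0 : G) ∈ H) (hHS : H ≤ S) :
    IsPrimeSIdeal G H (mIdeal G S ∩ (H : Set G)) := by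
  have h1 : (1 : G) ∉ mIdeal G S ∩ (H : Set G) := by
    rintro ⟨⟨-, hnu⟩, -⟩
    exact hnu ⟨1, S.one_mem, mul_one 1⟩
  refine ⟨Set.inter_subset_right, fun he => h1 (he.symm ▸ H.one_mem), ?_, ?_, ?_⟩
  · exact ⟨⟨hHS h0, by rintro ⟨y, -, hy⟩; simp at hy⟩, h0⟩
  · rintro p ⟨⟨hpS, hpu⟩, hpH⟩ h hh
    refine ⟨⟨S.mul_mem hpS (hHS hh), ?_⟩, H.mul_mem hpH hh⟩
    rintro ⟨y, hy, hxy⟩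
    exact hpu ⟨h * y, S.mul_mem (hHS hh) hy, by rw [← mul_assoc]; exact hxy⟩
  · intro a ha b hb hab
    by_contra hc
    push_neg at hc
    obtain ⟨hca, hcb⟩ := hc
    have hya : ∃ y ∈ S, a * y = 1 := by
      by_contra hy; exact hca ⟨⟨hHS ha, hy⟩, ha⟩
    have hyb : ∃ y ∈ S, b * y = 1 := by
      by_contra hy; exact hcb ⟨⟨hHS hb, hy⟩, hb⟩
    obtain ⟨y, hy, hay⟩ := hya
    obtain ⟨z, hz, hbz⟩ := hyb
    refine hab.1.2 ⟨y * z, S.mul_mem hy hz, ?_⟩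
    calc (a * b) * (y * z) = (a * y) * (b * z) := by
          simp [mul_comm, mul_left_comm, mul_assoc]
      _ = 1 := by rw [hay, hbz, mul_one]

theorem delta_loc {H : Submonoid G} {P : Set G} (hP : IsPrimeSIdeal G H P) :
    mIdeal G (locSubmonoid H P hP) ∩ (H : Set G) = P := by
  ext x
  constructor
  · rintro ⟨⟨hxS, hxu⟩, hxH⟩
    by_contra hxP
    exact hxu ⟨x⁻¹, ⟨1, H.one_mem, x, hxH, hxP, (one_mul _).symm⟩,
      mul_inv_cancel₀ (prime_ne_zero hP hxP)⟩
  · intro hxP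
    have hxH : x ∈ (H : Set G) := hP.1 hxP
    refine ⟨⟨⟨x, hxH, 1, H.one_mem, prime_one_not_mem hP, by simp⟩, ?_⟩, hxH⟩
    rintro ⟨y, ⟨c, hc, d, hd, hdP, rfl⟩, hxy⟩
    have hd0 : d ≠ 0 := prime_ne_zero hP hdP
    have hxc : x * c = d := by
      have h := congrArg (· * d) hxy
      simpa [mul_assoc, inv_mul_cancel_right₀ hd0] using h
    exact hdP (hxc ▸ hP.2.2.2.1 x hxP c hc)

end SPruferAux

namespace SPruferAux

variable {G : Type*} [CommGroupWithZero G]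

theorem mem_locSubmonoid {H : Submonoid G} {P : Set G} (hP : IsPrimeSIdeal G H P) (x : G) :
    x ∈ locSubmonoid H P hP ↔ ∃ a ∈ H, ∃ b ∈ H, b ∉ P ∧ x = a * b⁻¹ := Iff.rfl

/-- The domination map. -/
def deltaFun (H : Submonoid G) (h0 : (0 : G) ∈ H) : Zar G H → sSpec G H :=
  fun S => ⟨mIdeal G S.1 ∩ (H : Set G), delta_isPrime h0 S.2.2⟩

/-- The inverse of the domination map: localization at a prime. -/
def epsFun (H : Submonoid G) (h0 : (0 : G) ∈ H) (hq : IsQuotientGroupoid G H)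
    (hpruf : IsSPrufer G H) : sSpec G H → Zar G H :=
  fun P => ⟨locSubmonoid H P.1 P.2, loc_spec P.2 h0 hq hpruf⟩

end SPruferAux

theorem domination_map_homeomorph_of_sPrufer (H : Submonoid G) (h0 : (0 : G) ∈ H)
    (hq : IsQuotientGroupoid G H) (hpruf : IsSPrufer G H) :
    ∃ δ : Zar G H ≃ₜ sSpec G H,
      ∀ S : Zar G H, (δ S).1 = mIdeal G S.1 ∩ (H : Set G) := by
  classical
  set F : Zar G H → sSpec G H := SPruferAux.deltaFun H h0 with hF
  set E : sSpec G H → Zar G H := SPruferAux.epsFun H h0 hq hpruf with hE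
  have hleft : ∀ S, E (F S) = S := by
    intro S
    apply Subtype.ext
    apply SetLike.ext
    intro x
    exact (SPruferAux.mem_overmonoid_iff h0 hq hpruf S.2.2 x).symm
  have hright : ∀ P, F (E P) = P := fun P => Subtype.ext (SPruferAux.delta_loc P.2)
  have hcontF : Continuous F := by
    apply continuous_generateFrom_iff.mpr
    rintro D ⟨f, hfH, rfl⟩
    by_cases hf0 : f = 0
    · subst hf0
      have hempty : F ⁻¹' {P | (0 : G) ∉ P.1} = ∅ := by
        ext S
        have h : (0 : G) ∈ (F S).1 :=
          ⟨⟨S.2.1.1, by rintro ⟨y, -, hxy⟩; simp at hxy⟩, h0⟩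
        simp [h]
      rw [hempty]
      exact isOpen_empty
    · have hpre : F ⁻¹' {P | f ∉ P.1} = {S : Zar G H | f⁻¹ ∈ S.1} := by
        ext S
        simp only [Set.mem_preimage, Set.mem_setOf_eq]
        constructor
        · intro hf
          by_contra hfi
          refine hf ⟨⟨S.2.2 hfH, ?_⟩, hfH⟩
          rintro ⟨y, hy, hxy⟩
          exact hfi ((inv_eq_of_mul_eq_one_right hxy) ▸ hy)
        · rintro hfi ⟨⟨-, hnu⟩, -⟩
          exact hnu ⟨f⁻¹, hfi, mul_inv_cancel₀ hf0⟩
      rw [hpre]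
      exact TopologicalSpace.isOpen_generateFrom_of_mem ⟨f⁻¹, rfl⟩
  have hcontE : Continuous E := by
    apply continuous_generateFrom_iff.mpr
    rintro B ⟨x, rfl⟩
    have hpre : E ⁻¹' {S : Zar G H | x ∈ S.1} =
        ⋃ d : G, ⋃ (_ : d ∈ H ∧ x * d ∈ H), {P : sSpec G H | d ∉ P.1} := by
      ext P
      simp only [Set.mem_preimage, Set.mem_setOf_eq, Set.mem_iUnion]
      constructor
      · rintro ⟨a, ha, b, hb, hbP, rfl⟩
        refine ⟨b, ⟨hb, ?_⟩, hbP⟩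
        rw [inv_mul_cancel_right₀ (SPruferAux.prime_ne_zero P.2 hbP)]
        exact ha
      · rintro ⟨d, ⟨hd, hxd⟩, hdP⟩
        exact ⟨x * d, hxd, d, hd, hdP,
          (mul_inv_cancel_right₀ (SPruferAux.prime_ne_zero P.2 hdP) x).symm⟩
    rw [hpre]
    exact isOpen_iUnion fun d => isOpen_iUnion fun hd =>
      TopologicalSpace.isOpen_generateFrom_of_mem ⟨d, hd.1, rfl⟩
  exact ⟨⟨⟨F, E, hleft, hright⟩, hcontF, hcontE⟩, fun S => rfl⟩
end

section
/- Let H be a cancellative commutative monoid with zero (1 ≠ 0) with quotient groupoid G, assume H is an s-Prüfer monoid, and let δ : Zar(G|H) → s-spec(H) be the domination map. Then for every x ∈ G, δ(B(x)) = s-spec(H) \ V_s((H : x)), where (H : x) = {h ∈ H : h·x ∈ H} and V_s(X) = {P ∈ s-spec(H) : X ⊆ P}. That is, a prime s-ideal P lies in δ(B(x)) if and only if (H : x) ⊄ P. -/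
open Set Topology

variable (G : Type*) [CommGroupWithZero G]

/-- Key consequence of the `s`-Prüfer property: `H` is totally ordered by divisibility,
i.e. for nonzero `a, b ∈ H`, either `a * b⁻¹ ∈ H` or `b * a⁻¹ ∈ H`. -/
lemma sPrufer_div_total (H : Submonoid G) (h0 : (0 : G) ∈ H) (hpruf : IsSPrufer G H)
    {a b : G} (ha : a ∈ H) (hb : b ∈ H) (ha0 : a ≠ 0) (_hb0 : b ≠ 0) :
    a * b⁻¹ ∈ H ∨ b * a⁻¹ ∈ H := by
  set I : Set G := Set.image2 (· * ·) ({a, b} : Set G) (H : Set G) ∪ {0} with hI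
  have hIsubH : I ⊆ (H : Set G) := by
    rintro z (⟨e, he, h, hh, rfl⟩ | hz)
    · simp only [Set.mem_insert_iff, Set.mem_singleton_iff] at he
      rcases he with rfl | rfl
      · exact H.mul_mem ha hh
      · exact H.mul_mem hb hh
    · simp only [Set.mem_singleton_iff] at hz
      subst hz; exact h0
  have haI : a ∈ I := Or.inl ⟨a, Set.mem_insert _ _, 1, H.one_mem, mul_one a⟩
  have hbI : b ∈ I := Or.inl ⟨b, Set.mem_insert_of_mem _ rfl, 1, H.one_mem, mul_one b⟩
  have hfrac : IsFractionalSIdeal G H I := by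
    refine ⟨Or.inr rfl, ?_, 1, H.one_mem, one_ne_zero, ?_⟩
    · ext z
      constructor
      · rintro ⟨i, hi, h, hh, rfl⟩
        rcases hi with ⟨e, he, h', hh', rfl⟩ | hi0
        · exact Or.inl ⟨e, he, h' * h, H.mul_mem hh' hh, (mul_assoc _ _ _).symm⟩
        · simp only [Set.mem_singleton_iff] at hi0
          subst hi0
          exact Or.inr (by simp)
      · intro hz
        exact ⟨z, hz, 1, H.one_mem, mul_one z⟩
    · rintro _ ⟨i, hi, rfl⟩
      simpa using hIsubH hi
  have hfg : IsSFinitelyGenerated G H I :=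
    ⟨{a, b}, (Set.finite_singleton b).insert a, rfl⟩
  have hne : I ≠ {0} := by
    intro h
    rw [h] at haI
    exact ha0 (by simpa using haI)
  obtain ⟨J, _hJ, hIJ⟩ := hpruf I hfrac hfg hne
  have h1 : (1 : G) ∈ Set.image2 (· * ·) I J := hIJ ▸ H.one_mem
  obtain ⟨i, hi, j, hj, hij⟩ := h1
  have haj : a * j ∈ H := by
    have : a * j ∈ Set.image2 (· * ·) I J := ⟨a, haI, j, hj, rfl⟩
    rwa [hIJ] at this
  have hbj : b * j ∈ H := by
    have : b * j ∈ Set.image2 (· * ·) I J := ⟨b, hbI, j, hj, rfl⟩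
    rwa [hIJ] at this
  rcases hi with ⟨e, he, h, hh, rfl⟩ | hi0
  · simp only [Set.mem_insert_iff, Set.mem_singleton_iff] at he
    rcases he with he | he
    · -- e = a : then a⁻¹ = h * j and b * a⁻¹ = (b*j)*h ∈ H
      right
      rw [he] at hij
      have hinv : a⁻¹ = h * j :=
        inv_eq_of_mul_eq_one_right (by rw [← mul_assoc]; exact hij)
      rw [hinv, show b * (h * j) = b * j * h by rw [mul_comm h j, ← mul_assoc]]
      exact H.mul_mem hbj hh
    · left
      rw [he] at hij
      have hinv : b⁻¹ = h * j :=
        inv_eq_of_mul_eq_one_right (by rw [← mul_assoc]; exact hij)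
      rw [hinv, show a * (h * j) = a * j * h by rw [mul_comm h j, ← mul_assoc]]
      exact H.mul_mem haj hh
  · simp only [Set.mem_singleton_iff] at hi0
    subst hi0
    simp at hij

theorem image_of_basic_open_under_domination (H : Submonoid G) (h0 : (0 : G) ∈ H)
    (hq : IsQuotientGroupoid G H) (hpruf : IsSPrufer G H) (x : G) (P : sSpec G H) :
    (∃ S : Zar G H, x ∈ S.1 ∧ mIdeal G S.1 ∩ (H : Set G) = P.1) ↔
      ¬({h : G | h ∈ H ∧ h * x ∈ H} ⊆ P.1) := by
  obtain ⟨hPH, hPne, hP0, hPmul, hPprime⟩ := P.2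
  have h1P : (1 : G) ∉ P.1 := by
    intro h1
    apply hPne
    refine subset_antisymm hPH fun z hz => ?_
    simpa using hPmul 1 h1 z hz
  constructor
  · rintro ⟨S, hxS, hP⟩
    rw [Set.not_subset]
    by_cases hx0 : x = 0
    · -- (H : 0) = H, and P ≠ H
      obtain ⟨e, heH, heP⟩ : ∃ e, e ∈ (H : Set G) ∧ e ∉ P.1 := by
        by_contra hc
        push_neg at hc
        exact hPne (subset_antisymm hPH fun z hz => hc z hz)
      exact ⟨e, ⟨heH, by rw [hx0, mul_zero]; exact h0⟩, heP⟩
    · obtain ⟨a, ha, b, hb, hb0, rfl⟩ := hq x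
      have ha0 : a ≠ 0 := by
        intro h
        exact hx0 (by rw [h, zero_mul])
      rcases sPrufer_div_total G H h0 hpruf ha hb ha0 hb0 with hH | hH
      · -- x ∈ H : witness 1
        refine ⟨1, ⟨H.one_mem, by rwa [one_mul]⟩, ?_⟩
        rw [← hP]
        rintro ⟨⟨-, hni⟩, -⟩
        exact hni ⟨1, S.1.one_mem, one_mul 1⟩
      · -- x⁻¹ = b * a⁻¹ ∈ H : witness u = b * a⁻¹
        have hux : (b * a⁻¹) * (a * b⁻¹) = 1 := by
          rw [mul_assoc, ← mul_assoc a⁻¹, inv_mul_cancel₀ ha0, one_mul,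
            mul_inv_cancel₀ hb0]
        refine ⟨b * a⁻¹, ⟨hH, by rw [hux]; exact H.one_mem⟩, ?_⟩
        rw [← hP]
        rintro ⟨⟨-, hni⟩, -⟩
        exact hni ⟨a * b⁻¹, hxS, hux⟩
  · intro hn
    obtain ⟨h, ⟨hhH, hhx⟩, hhP⟩ := Set.not_subset.mp hn
    have hh0 : h ≠ 0 := fun e => hhP (e ▸ hP0)
    set S : Submonoid G :=
      { carrier := {g | ∃ a ∈ H, ∃ b ∈ H, b ∉ P.1 ∧ g = a * b⁻¹}
        mul_mem' := by
          rintro g g' ⟨a, ha, b, hb, hbP, rfl⟩ ⟨a', ha', b', hb', hbP', rfl⟩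
          refine ⟨a * a', H.mul_mem ha ha', b * b', H.mul_mem hb hb', ?_, ?_⟩
          · intro hbb
            rcases hPprime b hb b' hb' hbb with hmem | hmem
            exacts [hbP hmem, hbP' hmem]
          · rw [mul_inv]
            exact mul_mul_mul_comm a b⁻¹ a' b'⁻¹
        one_mem' := ⟨1, H.one_mem, 1, H.one_mem, h1P, by simp⟩ } with hSdef
    have hHS : ∀ g ∈ H, g ∈ S := fun g hg => ⟨g, hg, 1, H.one_mem, h1P, by simp⟩
    have hval : IsValSubmonoid G S := by
      refine ⟨⟨0, h0, 1, H.one_mem, h1P, by simp⟩, fun g hg => ?_⟩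
      obtain ⟨a, ha, b, hb, hb0, rfl⟩ := hq g
      have ha0 : a ≠ 0 := by
        intro h
        exact hg (by rw [h, zero_mul])
      rcases sPrufer_div_total G H h0 hpruf ha hb ha0 hb0 with hH | hH
      · exact Or.inl (hHS _ hH)
      · right
        have : (a * b⁻¹)⁻¹ = b * a⁻¹ := by rw [mul_inv, inv_inv, mul_comm]
        rw [this]
        exact hHS _ hH
    refine ⟨⟨S, hval, hHS⟩, ?_, ?_⟩
    · exact ⟨h * x, hhx, h, hhH, hhP,
        by rw [mul_comm h x, mul_assoc, mul_inv_cancel₀ hh0, mul_one]⟩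
    · ext g
      simp only [mIdeal, Set.mem_inter_iff, Set.mem_setOf_eq]
      constructor
      · rintro ⟨⟨hgS, hgni⟩, hgH⟩
        by_contra hgP
        have hg0 : g ≠ 0 := fun e => hgP (e ▸ hP0)
        exact hgni ⟨g⁻¹, ⟨1, H.one_mem, g, hgH, hgP, (one_mul _).symm⟩,
          mul_inv_cancel₀ hg0⟩
      · intro hgP
        refine ⟨⟨hHS g (hPH hgP), ?_⟩, hPH hgP⟩
        rintro ⟨y, ⟨a, ha, b, hb, hbP, rfl⟩, hgy⟩
        have hb0 : b ≠ 0 := fun e => hbP (e ▸ hP0)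
        have hga : g * a = b := by
          rw [← mul_assoc] at hgy
          exact (mul_inv_eq_one₀ hb0).mp hgy
        exact hbP (hga ▸ hPmul g hgP a ha)
end

section
/- Let H be a cancellative commutative monoid with zero (1 ≠ 0) and let r be a finitary ideal system on H. Then the set I_r(H) of all r-ideals of H, endowed with the Zariski topology, is a spectral space. -/
open Set Topology

/-- An ideal system on a cancellative commutative monoid with zero `H`. -/
structure IdealSystem (H : Type*) [CommMonoidWithZero H] [IsCancelMulZero H] where
  toFun : Set H → Set H
  id1 : ∀ X : Set H, X ∪ {0} ⊆ toFun X
  id2 : ∀ X Y : Set H, X ⊆ toFun Y → toFun X ⊆ toFun Y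
  id3 : ∀ (c : H) (X : Set H), (fun x => c * x) '' toFun X = toFun ((fun x => c * x) '' X)
  id4 : ∀ c y : H, c * y ∈ toFun {c}

/-- An ideal system is finitary if `X_r` is the union of `E_r` over finite subsets `E ⊆ X`. -/
def IdealSystem.Finitary {H : Type*} [CommMonoidWithZero H] [IsCancelMulZero H] (r : IdealSystem H) : Prop :=
  ∀ X : Set H, r.toFun X = ⋃ E ∈ {E : Set H | E ⊆ X ∧ E.Finite}, r.toFun E

/-- The set `I_r(H)` of all `r`-ideals of `H`. -/
def RIdeals {H : Type*} [CommMonoidWithZero H] [IsCancelMulZero H] (r : IdealSystem H) : Type _ :=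
  {I : Set H // ∃ X : Set H, I = r.toFun X}

/-- The Zariski topology on `I_r(H)`, generated by the sets `U_r(x) = {I | x ∉ I}`. -/
instance {H : Type*} [CommMonoidWithZero H] [IsCancelMulZero H] (r : IdealSystem H) :
    TopologicalSpace (RIdeals r) :=
  TopologicalSpace.generateFrom
    {U : Set (RIdeals r) | ∃ x : H, U = {I | x ∉ I.1}}

namespace IdealSystemAux

variable {H : Type*} [CommMonoidWithZero H] [IsCancelMulZero H] (r : IdealSystem H)

lemma subset_toFun (X : Set H) : X ⊆ r.toFun X :=
  (Set.union_subset_iff.mp (r.id1 X)).1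

lemma toFun_mono {X Y : Set H} (h : X ⊆ Y) : r.toFun X ⊆ r.toFun Y :=
  r.id2 X Y (h.trans (subset_toFun r Y))

lemma toFun_idem (X : Set H) : r.toFun (r.toFun X) = r.toFun X :=
  subset_antisymm (r.id2 _ _ Set.Subset.rfl) (subset_toFun r _)

lemma fix (I : RIdeals r) : r.toFun I.1 = I.1 := by
  obtain ⟨X, hX⟩ := I.2
  rw [hX, toFun_idem]

/-- The basic open set determined by a set `E`. -/
def basic (E : Set H) : Set (RIdeals r) := {I | ∀ x ∈ E, x ∉ I.1}

lemma basic_empty : basic r (∅ : Set H) = univ := by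
  ext I; simp [basic]

lemma basic_union (E F : Set H) : basic r (E ∪ F) = basic r E ∩ basic r F := by
  ext I; simp only [basic, mem_setOf_eq, mem_inter_iff, Set.mem_union]
  constructor
  · exact fun h => ⟨fun x hx => h x (Or.inl hx), fun x hx => h x (Or.inr hx)⟩
  · rintro ⟨h1, h2⟩ x (hx | hx)
    exacts [h1 x hx, h2 x hx]

lemma isOpen_basic {E : Set H} (hE : E.Finite) : IsOpen (basic r E) := by
  have : basic r E = ⋂ x ∈ E, {I : RIdeals r | x ∉ I.1} := by
    ext I; simp [basic]
  rw [this]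
  exact hE.isOpen_biInter fun x _ =>
    TopologicalSpace.isOpen_generateFrom_of_mem ⟨x, rfl⟩

/-- Every open set containing a point contains a basic open set around it. -/
lemma exists_basic {U : Set (RIdeals r)} (hU : IsOpen U) :
    ∀ I ∈ U, ∃ E : Set H, E.Finite ∧ I ∈ basic r E ∧ basic r E ⊆ U := by
  have hU' : TopologicalSpace.GenerateOpen
      {U : Set (RIdeals r) | ∃ x : H, U = {I | x ∉ I.1}} U := hU
  clear hU
  induction hU' with
  | basic s hs =>
    rintro I hI
    obtain ⟨x, rfl⟩ := hs
    exact ⟨{x}, finite_singleton x, fun y hy => by simpa using hy ▸ hI,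
      fun J hJ => hJ x rfl⟩
  | univ => exact fun I _ => ⟨∅, finite_empty, by simp [basic], subset_univ _⟩
  | inter s t _ _ ihs iht =>
    rintro I ⟨hIs, hIt⟩
    obtain ⟨E, hEfin, hIE, hEs⟩ := ihs I hIs
    obtain ⟨F, hFfin, hIF, hFt⟩ := iht I hIt
    refine ⟨E ∪ F, hEfin.union hFfin, ?_, ?_⟩
    · rw [basic_union]; exact ⟨hIE, hIF⟩
    · rw [basic_union]; exact fun J hJ => ⟨hEs hJ.1, hFt hJ.2⟩
  | sUnion S _ ih =>
    rintro I hI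
    obtain ⟨s, hs, hIs⟩ := hI
    obtain ⟨E, hEfin, hIE, hEs⟩ := ih s hs I hIs
    exact ⟨E, hEfin, hIE, hEs.trans (subset_sUnion_of_mem hs)⟩

/-- The limit ideal of an ultrafilter. -/
def limSet (f : Ultrafilter (RIdeals r)) : Set H := {x | {J : RIdeals r | x ∈ J.1} ∈ f}

lemma limSet_ideal (hr : r.Finitary) (f : Ultrafilter (RIdeals r)) :
    ∃ X : Set H, limSet r f = r.toFun X := by
  refine ⟨limSet r f, subset_antisymm (subset_toFun r _) ?_⟩
  rw [hr (limSet r f)]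
  rintro x hx
  simp only [mem_iUnion, mem_setOf_eq] at hx
  obtain ⟨E, ⟨hEsub, hEfin⟩, hxE⟩ := hx
  have hmem : (⋂ y ∈ E, {J : RIdeals r | y ∈ J.1}) ∈ f :=
    (Filter.biInter_mem hEfin).mpr fun y hy => hEsub hy
  refine f.mem_of_superset hmem fun J hJ => ?_
  have hEJ : E ⊆ J.1 := fun y hy => by
    simp only [mem_iInter] at hJ; exact hJ y hy
  have : r.toFun E ⊆ J.1 := (fix r J) ▸ toFun_mono r hEJ
  exact this hxE

/-- The limit point of an ultrafilter in `RIdeals r`. -/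
def limPt (hr : r.Finitary) (f : Ultrafilter (RIdeals r)) : RIdeals r := ⟨limSet r f, limSet_ideal r hr f⟩

lemma le_nhds_limPt (hr : r.Finitary) (f : Ultrafilter (RIdeals r)) : ↑f ≤ 𝓝 (limPt r hr f) := by
  rw [le_nhds_iff]
  intro U hU hUopen
  obtain ⟨E, hEfin, hIE, hEsub⟩ := exists_basic r hUopen _ hU
  refine f.toFilter.mem_of_superset ?_ hEsub
  have : (⋂ x ∈ E, {J : RIdeals r | x ∉ J.1}) ∈ f := by
    refine (Filter.biInter_mem hEfin).mpr fun x hx => ?_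
    have hx' : x ∉ limSet r f := hIE x hx
    exact (Ultrafilter.compl_mem_iff_notMem.mpr hx' : {J : RIdeals r | x ∈ J.1}ᶜ ∈ f)
  refine f.mem_of_superset this fun J hJ x hx => ?_
  simp only [mem_iInter] at hJ; exact hJ x hx

lemma isCompact_basic (hr : r.Finitary) {E : Set H} (hE : E.Finite) : IsCompact (basic r E) := by
  rw [isCompact_iff_ultrafilter_le_nhds]
  intro f hf
  refine ⟨limPt r hr f, fun x hx => ?_, le_nhds_limPt r hr f⟩
  intro hxlim
  have h1 : {J : RIdeals r | x ∈ J.1} ∈ f := hxlim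
  have h2 : basic r E ∈ f := Filter.le_principal_iff.mp hf
  have : ({J : RIdeals r | x ∈ J.1} ∩ basic r E) ∈ f := Filter.inter_mem h1 h2
  obtain ⟨J, hJ1, hJ2⟩ := f.nonempty_of_mem this
  exact hJ2 x hx hJ1

end IdealSystemAux

namespace IdealSystemAux

variable {H : Type*} [CommMonoidWithZero H] [IsCancelMulZero H] (r : IdealSystem H)

/-- Opens are down-closed with respect to inclusion of ideals. -/
lemma open_down {U : Set (RIdeals r)} (hU : IsOpen U) {I J : RIdeals r}
    (hIJ : I.1 ⊆ J.1) (hJ : J ∈ U) : I ∈ U := by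
  obtain ⟨E, _, hJE, hEsub⟩ := exists_basic r hU J hJ
  exact hEsub fun x hx hxI => hJE x hx (hIJ hxI)

lemma closure_singleton (I : RIdeals r) :
    closure ({I} : Set (RIdeals r)) = {J | I.1 ⊆ J.1} := by
  ext J
  constructor
  · intro hJ x hxI
    by_contra hxJ
    have hopen : IsOpen {K : RIdeals r | x ∉ K.1} :=
      TopologicalSpace.isOpen_generateFrom_of_mem ⟨x, rfl⟩
    obtain ⟨K, hK1, hK2⟩ := mem_closure_iff.mp hJ _ hopen hxJ
    rw [mem_singleton_iff] at hK2
    exact hK1 (hK2 ▸ hxI)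
  · intro hIJ
    rw [mem_closure_iff]
    intro U hU hJU
    exact ⟨I, open_down r hU hIJ hJU, rfl⟩

lemma t0 : T0Space (RIdeals r) := by
  refine ⟨fun I J h => ?_⟩
  apply Subtype.ext
  ext x
  have hopen : IsOpen {K : RIdeals r | x ∉ K.1} :=
    TopologicalSpace.isOpen_generateFrom_of_mem ⟨x, rfl⟩
  have := h.mem_open_iff hopen
  simp only [mem_setOf_eq] at this
  exact not_iff_not.mp this

open Classical in
lemma quasiSober (hr : r.Finitary) : QuasiSober (RIdeals r) := by
  constructor
  intro C hC hCclosed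
  -- candidate generic point: the intersection of all members of C
  have hideal : ∃ X : Set H, (⋂ J ∈ C, J.1) = r.toFun X := by
    refine ⟨⋂ J ∈ C, J.1, subset_antisymm (subset_toFun r _) ?_⟩
    refine subset_iInter₂ fun J hJ => ?_
    calc r.toFun (⋂ K ∈ C, K.1) ⊆ r.toFun J.1 := toFun_mono r (iInter₂_subset J hJ)
      _ = J.1 := fix r J
  set I0 : RIdeals r := ⟨⋂ J ∈ C, J.1, hideal⟩ with hI0
  have hI0C : I0 ∈ C := by
    by_contra hnot
    obtain ⟨E, hEfin, hIE, hEsub⟩ :=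
      exists_basic r hCclosed.isOpen_compl I0 hnot
    -- every J ∈ C meets E, so C is covered by the closed sets V x, x ∈ E
    have hcover : C ⊆ ⋃₀ ↑(hEfin.toFinset.image fun x => {J : RIdeals r | x ∈ J.1}) := by
      intro J hJ
      by_contra hJ'
      refine (hEsub fun x hx hxJ => hJ' ?_) hJ
      simp only [Finset.coe_image, sUnion_image, mem_iUnion, Set.Finite.mem_toFinset]
      exact ⟨x, by simpa using hx, hxJ⟩

    have hclosed : ∀ z ∈ hEfin.toFinset.image fun x => {J : RIdeals r | x ∈ J.1},
        IsClosed z := by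
      intro z hz
      simp only [Finset.mem_image, Set.Finite.mem_toFinset] at hz
      obtain ⟨x, _, rfl⟩ := hz
      have : {J : RIdeals r | x ∈ J.1} = {J : RIdeals r | x ∉ J.1}ᶜ := by
        ext J; simp
      rw [this]
      have hopen : IsOpen {J : RIdeals r | x ∉ J.1} :=
        TopologicalSpace.isOpen_generateFrom_of_mem ⟨x, rfl⟩
      exact hopen.isClosed_compl
    obtain ⟨z, hz, hCz⟩ := (isIrreducible_iff_sUnion_isClosed.mp hC) _ hclosed hcover
    simp only [Finset.mem_image, Set.Finite.mem_toFinset] at hz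
    obtain ⟨x, hxE, rfl⟩ := hz
    have hxI0 : x ∈ I0.1 := by
      refine mem_iInter₂.mpr fun J hJ => hCz hJ
    exact hIE x hxE hxI0
  refine ⟨I0, ?_⟩
  rw [IsGenericPoint, closure_singleton]
  apply subset_antisymm
  · intro J hJ
    have : J ∈ closure ({I0} : Set (RIdeals r)) := by
      rw [closure_singleton]; exact hJ
    exact hCclosed.closure_subset_iff.mpr (singleton_subset_iff.mpr hI0C)
      ((closure_singleton r I0).symm ▸ this)
  · intro J hJ x hx
    exact mem_iInter₂.mp hx J hJ

end IdealSystemAux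

namespace IdealSystemAux

variable {H : Type*} [CommMonoidWithZero H] [IsCancelMulZero H] (r : IdealSystem H)

lemma compactSpace (hr : r.Finitary) : CompactSpace (RIdeals r) := by
  constructor
  rw [← basic_empty r]
  exact isCompact_basic r hr finite_empty

lemma basis (hr : r.Finitary) :
    TopologicalSpace.IsTopologicalBasis
      {U : Set (RIdeals r) | IsOpen U ∧ IsCompact U} := by
  refine TopologicalSpace.isTopologicalBasis_of_isOpen_of_nhds (fun u hu => hu.1) ?_
  intro a u ha hu
  obtain ⟨E, hEfin, haE, hEsub⟩ := exists_basic r hu a ha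
  exact ⟨basic r E, ⟨isOpen_basic r hEfin, isCompact_basic r hr hEfin⟩, haE, hEsub⟩

lemma eq_union_basic {U : Set (RIdeals r)} (hUo : IsOpen U) (hUc : IsCompact U) :
    ∃ t : Finset {E : Set H // E.Finite ∧ basic r E ⊆ U},
      U = ⋃ i ∈ t, basic r i.1 := by
  have hcover : U ⊆ ⋃ i : {E : Set H // E.Finite ∧ basic r E ⊆ U}, basic r i.1 := by
    intro I hI
    obtain ⟨E, hEfin, hIE, hEsub⟩ := exists_basic r hUo I hI
    exact mem_iUnion.mpr ⟨⟨E, hEfin, hEsub⟩, hIE⟩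
  obtain ⟨t, ht⟩ := hUc.elim_finite_subcover _ (fun i => isOpen_basic r i.2.1) hcover
  refine ⟨t, subset_antisymm ht ?_⟩
  exact iUnion₂_subset fun i _ => i.2.2

lemma inter_compact (hr : r.Finitary) (U V : Set (RIdeals r))
    (hUo : IsOpen U) (hUc : IsCompact U) (hVo : IsOpen V) (hVc : IsCompact V) :
    IsCompact (U ∩ V) := by
  obtain ⟨t, ht⟩ := eq_union_basic r hUo hUc
  obtain ⟨s, hs⟩ := eq_union_basic r hVo hVc
  have heq : U ∩ V = ⋃ i ∈ t, ⋃ j ∈ s, basic r (i.1 ∪ j.1) := by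
    ext I
    have h1 := Set.ext_iff.mp ht I
    have h2 := Set.ext_iff.mp hs I
    simp only [mem_iUnion, exists_prop] at h1 h2
    simp only [mem_inter_iff, mem_iUnion, basic_union, mem_inter_iff, exists_prop, h1, h2]
    tauto
  rw [heq]
  refine t.finite_toSet.isCompact_biUnion fun i _ => ?_
  exact s.finite_toSet.isCompact_biUnion fun j _ =>
    isCompact_basic r hr (i.2.1.union j.2.1)

end IdealSystemAux

theorem rIdeals_is_spectral {H : Type*} [CommMonoidWithZero H] [IsCancelMulZero H] [Nontrivial H]
    (r : IdealSystem H) (hr : r.Finitary) :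
    IsSpectralSpace (RIdeals r) := by
  exact ⟨IdealSystemAux.compactSpace r hr, IdealSystemAux.t0 r,
    IdealSystemAux.quasiSober r hr, IdealSystemAux.basis r hr,
    IdealSystemAux.inter_compact r hr⟩
end

section
/- Let H be a cancellative commutative monoid with zero (1 ≠ 0) and let r be a finitary ideal system on H. Then the set r-spec(H) of prime r-ideals is proconstructible in I_r(H); in particular, r-spec(H), endowed with the subspace (Zariski) topology, is a spectral space. -/
open Set Topology

/-- The constructible topology associated with a topology: the topology generated by the
sets `U ∩ Vᶜ` with `U`, `V` quasi-compact open subsets. -/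
def constructibleTop (X : Type*) [TopologicalSpace X] : TopologicalSpace X :=
  TopologicalSpace.generateFrom
    {s : Set X | ∃ U V : Set X, IsOpen U ∧ IsCompact U ∧ IsOpen V ∧ IsCompact V ∧ s = U ∩ Vᶜ}

/-- The set of prime `r`-ideals, as a subset of `I_r(H)`. -/
def rSpecSet {H : Type*} [CommMonoidWithZero H] [IsCancelMulZero H] (r : IdealSystem H) :
    Set (RIdeals r) :=
  {I | I.1 ≠ Set.univ ∧ ∀ a b : H, a * b ∈ I.1 → a ∈ I.1 ∨ b ∈ I.1}

namespace RSpecAux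

open TopologicalSpace Filter

variable {H : Type*} [CommMonoidWithZero H] [IsCancelMulZero H] (r : IdealSystem H)

lemma subset_toFun (X : Set H) : X ⊆ r.toFun X := fun x hx => r.id1 X (Or.inl hx)

lemma fixed (I : RIdeals r) : r.toFun I.1 = I.1 := by
  obtain ⟨X, hX⟩ := I.2
  refine subset_antisymm ?_ (subset_toFun r _)
  have : I.1 ⊆ r.toFun X := hX.le
  simpa [← hX] using r.id2 I.1 X this

lemma toFun_subset {X : Set H} (I : RIdeals r) (h : X ⊆ I.1) : r.toFun X ⊆ I.1 := by
  have := r.id2 X I.1 (h.trans (subset_toFun r _))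
  simpa [fixed r I] using this

lemma eq_univ_of_one_mem (I : RIdeals r) (h : (1 : H) ∈ I.1) : I.1 = univ := by
  refine eq_univ_of_forall fun y => ?_
  have h1 : ({1} : Set H) ⊆ I.1 := by simpa using h
  have := toFun_subset r I h1 (r.id4 1 y)
  simpa using this

/-- The subbasis generating the Zariski topology. -/
def gen : Set (Set (RIdeals r)) := {U : Set (RIdeals r) | ∃ x : H, U = {I | x ∉ I.1}}

lemma topo_eq : (inferInstance : TopologicalSpace (RIdeals r)) = generateFrom (gen r) := rfl

lemma isOpen_U (x : H) : IsOpen {I : RIdeals r | x ∉ I.1} :=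
  TopologicalSpace.isOpen_generateFrom_of_mem ⟨x, rfl⟩

variable (hr : r.Finitary)
include hr

def limSet (𝒰 : Ultrafilter (RIdeals r)) : Set H := {z | {I : RIdeals r | z ∈ I.1} ∈ 𝒰}

lemma limSet_fixed (𝒰 : Ultrafilter (RIdeals r)) : r.toFun (limSet r 𝒰) = limSet r 𝒰 := by
  refine subset_antisymm ?_ (subset_toFun r _)
  intro z hz
  rw [hr (limSet r 𝒰)] at hz
  simp only [mem_iUnion, mem_setOf_eq, exists_prop] at hz
  obtain ⟨E, ⟨hEsub, hEfin⟩, hzE⟩ := hz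
  have hinter : (⋂ e ∈ E, {I : RIdeals r | e ∈ I.1}) ∈ 𝒰 :=
    (Filter.biInter_mem hEfin).2 fun e he => hEsub he
  refine 𝒰.toFilter.mem_of_superset hinter fun I hI => ?_
  have hE : E ⊆ I.1 := fun e he => by
    have := mem_iInter₂.1 hI e he; exact this
  exact toFun_subset r I hE hzE

def limIdeal (𝒰 : Ultrafilter (RIdeals r)) : RIdeals r :=
  ⟨limSet r 𝒰, limSet r 𝒰, (limSet_fixed r hr 𝒰).symm⟩

lemma tendsto_lim (𝒰 : Ultrafilter (RIdeals r)) : ↑𝒰 ≤ 𝓝 (limIdeal r hr 𝒰) := by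
  show ↑𝒰 ≤ @nhds _ (generateFrom (gen r)) _
  rw [nhds_generateFrom]
  refine le_iInf₂ fun s hs => ?_
  obtain ⟨hmem, x, rfl⟩ := hs
  rw [le_principal_iff]
  have : {I : RIdeals r | x ∈ I.1} ∉ 𝒰 := hmem
  simpa [Set.compl_setOf] using (Ultrafilter.compl_mem_iff_notMem.2 this)

lemma isCompact_of_lim {K : Set (RIdeals r)}
    (h : ∀ 𝒰 : Ultrafilter (RIdeals r), K ∈ 𝒰 → limIdeal r hr 𝒰 ∈ K) : IsCompact K :=
  isCompact_iff_ultrafilter_le_nhds.2 fun 𝒰 hK =>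
    ⟨limIdeal r hr 𝒰, h 𝒰 (le_principal_iff.1 hK), tendsto_lim r hr 𝒰⟩

lemma lim_not_mem {x : H} {𝒰 : Ultrafilter (RIdeals r)}
    (h : {I : RIdeals r | x ∉ I.1} ∈ 𝒰) : x ∉ (limIdeal r hr 𝒰).1 := by
  intro hx
  have : {I : RIdeals r | x ∈ I.1} ∈ 𝒰 := hx
  have := 𝒰.toFilter.inter_mem this h
  have : (∅ : Set (RIdeals r)) ∈ 𝒰 := by
    refine Filter.mem_of_superset this fun I hI => absurd hI.1 hI.2
  exact 𝒰.empty_notMem this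

lemma lim_prime {𝒰 : Ultrafilter (RIdeals r)} (h : rSpecSet r ∈ 𝒰) :
    limIdeal r hr 𝒰 ∈ rSpecSet r := by
  constructor
  · have hone : {I : RIdeals r | (1:H) ∉ I.1} ∈ 𝒰 := by
      refine Filter.mem_of_superset h fun I hI => ?_
      exact fun h1 => hI.1 (eq_univ_of_one_mem r I h1)
    have := lim_not_mem r hr hone
    intro hu
    exact this (hu ▸ mem_univ _)
  · intro a b hab
    have hab' : {I : RIdeals r | a * b ∈ I.1} ∈ 𝒰 := hab
    have hsub : {I : RIdeals r | a * b ∈ I.1} ∩ rSpecSet r ⊆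
        {I : RIdeals r | a ∈ I.1} ∪ {I : RIdeals r | b ∈ I.1} := fun I hI =>
      hI.2.2 a b hI.1
    have hmem : ({I : RIdeals r | a ∈ I.1} ∪ {I : RIdeals r | b ∈ I.1}) ∈ 𝒰 :=
      Filter.mem_of_superset (𝒰.toFilter.inter_mem hab' h) hsub
    rcases (Ultrafilter.union_mem_iff.1 hmem) with h | h
    · exact Or.inl h
    · exact Or.inr h

lemma isCompact_sInter {f : Set (Set (RIdeals r))} (hfin : f.Finite) (hsub : f ⊆ gen r) :
    IsCompact (⋂₀ f) := by
  refine isCompact_of_lim r hr fun 𝒰 hK => mem_sInter.2 ?_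
  intro s hs
  obtain ⟨x, rfl⟩ := hsub hs
  exact lim_not_mem r hr (Filter.mem_of_superset hK fun I hI => mem_sInter.1 hI _ hs)

lemma isCompact_spec_sInter {f : Set (Set (RIdeals r))} (hfin : f.Finite) (hsub : f ⊆ gen r) :
    IsCompact (rSpecSet r ∩ ⋂₀ f) := by
  refine isCompact_of_lim r hr fun 𝒰 hK => ?_
  have hS : rSpecSet r ∈ 𝒰 := Filter.mem_of_superset hK inter_subset_left
  refine ⟨lim_prime r hr hS, mem_sInter.2 ?_⟩
  intro s hs
  obtain ⟨x, rfl⟩ := hsub hs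
  exact lim_not_mem r hr (Filter.mem_of_superset hK fun I hI => mem_sInter.1 hI.2 _ hs)


lemma isCompact_univ' : IsCompact (univ : Set (RIdeals r)) := by
  simpa using isCompact_sInter r hr (f := ∅) finite_empty (empty_subset _)

lemma isCompact_U (x : H) : IsCompact {I : RIdeals r | x ∉ I.1} := by
  simpa using isCompact_sInter r hr (f := {{I : RIdeals r | x ∉ I.1}})
    (finite_singleton _) (by rintro s rfl; exact ⟨x, rfl⟩)

lemma isCompact_UU (a b : H) :
    IsCompact ({I : RIdeals r | a ∉ I.1} ∩ {I : RIdeals r | b ∉ I.1}) := by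
  have := isCompact_sInter r hr (f := {{I : RIdeals r | a ∉ I.1}, {I : RIdeals r | b ∉ I.1}})
    (by simp) (by rintro s (rfl | rfl); exacts [⟨a, rfl⟩, ⟨b, rfl⟩])
  simpa [sInter_pair] using this

lemma compl_spec_eq :
    (rSpecSet r)ᶜ = {I : RIdeals r | (1:H) ∈ I.1} ∪
      ⋃ (a : H), ⋃ (b : H),
        (({I : RIdeals r | a ∉ I.1} ∩ {I : RIdeals r | b ∉ I.1}) ∩ {I : RIdeals r | a * b ∉ I.1}ᶜ) := by
  ext I
  simp only [rSpecSet, mem_compl_iff, mem_setOf_eq, not_and, not_forall, mem_union,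
    mem_iUnion, mem_inter_iff, mem_compl_iff, not_not]
  constructor
  · intro h
    by_cases hu : I.1 = univ
    · exact Or.inl (by rw [hu]; trivial)
    · obtain ⟨a, b, hab, hnot⟩ := h hu
      push_neg at hnot
      exact Or.inr ⟨a, b, ⟨hnot.1, hnot.2⟩, hab⟩
  · rintro (h1 | ⟨a, b, ⟨ha, hb⟩, hab⟩)
    · intro hu; exact absurd (eq_univ_of_one_mem r I h1) hu
    · intro _; exact ⟨a, b, hab, by tauto⟩

lemma spec_closed_constructible :
    @IsClosed _ (constructibleTop (RIdeals r)) (rSpecSet r) := by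
  have hopen : @IsOpen _ (constructibleTop (RIdeals r)) ((rSpecSet r)ᶜ) := ?_
  · exact @IsClosed.mk _ (constructibleTop (RIdeals r)) _ hopen
  rw [compl_spec_eq r hr]
  have hgen : ∀ s ∈ {s : Set (RIdeals r) | ∃ U V : Set (RIdeals r),
      IsOpen U ∧ IsCompact U ∧ IsOpen V ∧ IsCompact V ∧ s = U ∩ Vᶜ},
      @IsOpen _ (constructibleTop (RIdeals r)) s := fun s hs =>
    TopologicalSpace.isOpen_generateFrom_of_mem hs
  refine @IsOpen.union _ _ _ (constructibleTop (RIdeals r)) ?_ ?_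
  · refine hgen _ ⟨univ, {I : RIdeals r | (1:H) ∉ I.1}, isOpen_univ, isCompact_univ' r hr,
      isOpen_U r 1, isCompact_U r hr 1, ?_⟩
    ext I; simp
  · refine @isOpen_iUnion _ _ (constructibleTop (RIdeals r)) _ fun a => ?_
    refine @isOpen_iUnion _ _ (constructibleTop (RIdeals r)) _ fun b => ?_
    exact hgen _ ⟨_, {I : RIdeals r | a * b ∉ I.1},
      (isOpen_U r a).inter (isOpen_U r b), isCompact_UU r hr a b,
      isOpen_U r (a*b), isCompact_U r hr (a*b), rfl⟩

omit hr in
lemma t0 : T0Space (RIdeals r) := by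
  refine ⟨fun I J h => Subtype.ext ?_⟩
  by_contra hne
  obtain ⟨z, hz⟩ : ∃ z, ¬(z ∈ I.1 ↔ z ∈ J.1) := by
    by_contra hall
    push_neg at hall
    exact hne (Set.ext hall)
  have := h.mem_open_iff (s := {K : RIdeals r | z ∉ K.1}) (isOpen_U r z)
  simp only [mem_setOf_eq] at this
  tauto

omit hr in
lemma basisB : IsTopologicalBasis
    ((fun f : Set (Set (RIdeals r)) => ⋂₀ f) '' {f : Set (Set (RIdeals r)) | f.Finite ∧ f ⊆ gen r}) :=
  isTopologicalBasis_of_subbasis (topo_eq r)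

omit hr in
lemma basisS : IsTopologicalBasis
    ((preimage (Subtype.val : rSpecSet r → RIdeals r)) ''
      ((fun f : Set (Set (RIdeals r)) => ⋂₀ f) '' {f : Set (Set (RIdeals r)) | f.Finite ∧ f ⊆ gen r})) :=
  (basisB r).isInducing Topology.IsInducing.subtypeVal

lemma basisS_compact {b : Set ↥(rSpecSet r)}
    (hb : b ∈ (preimage (Subtype.val : rSpecSet r → RIdeals r)) ''
      ((fun f : Set (Set (RIdeals r)) => ⋂₀ f) '' {f : Set (Set (RIdeals r)) | f.Finite ∧ f ⊆ gen r})) :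
    IsCompact b := by
  obtain ⟨t, ⟨f, ⟨hfin, hsub⟩, rfl⟩, rfl⟩ := hb
  rw [Topology.IsEmbedding.subtypeVal.isCompact_iff, Subtype.image_preimage_coe]
  exact isCompact_spec_sInter r hr hfin hsub

omit hr in
lemma quasiSober : QuasiSober ↥(rSpecSet r) := by
  constructor
  intro C hirr hcl
  have hirr' : IsIrreducible (Subtype.val '' C : Set (RIdeals r)) :=
    hirr.image _ continuous_subtype_val.continuousOn
  set C' : Set (RIdeals r) := Subtype.val '' C with hC'
  obtain ⟨I₀, hI₀⟩ := hirr'.nonempty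
  set P : Set H := ⋂ I ∈ C', I.1 with hP
  have hPsub : ∀ {I : RIdeals r}, I ∈ C' → P ⊆ I.1 := fun hI => biInter_subset_of_mem hI
  have hPfix : r.toFun P = P := by
    refine subset_antisymm (subset_iInter₂ fun I hI => ?_) (subset_toFun r _)
    exact (r.id2 P I.1 ((hPsub hI).trans (subset_toFun r _))).trans (fixed r I).le
  set p0 : RIdeals r := ⟨P, P, hPfix.symm⟩ with hp0
  have hprop : ∀ I ∈ C', I ∈ rSpecSet r := by
    rintro I ⟨J, _, rfl⟩; exact J.2
  have hproper : p0.1 ≠ univ := by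
    intro h
    have h1 : (1:H) ∈ P := by
      have hm := mem_univ (1:H)
      rw [← h] at hm
      exact hm
    exact (hprop I₀ hI₀).1 (eq_univ_of_one_mem r I₀ (hPsub hI₀ h1))
  have hprime : ∀ a b : H, a * b ∈ p0.1 → a ∈ p0.1 ∨ b ∈ p0.1 := by
    intro a b hab
    by_contra hcon
    push_neg at hcon
    obtain ⟨ha, hb⟩ := hcon
    have hUa : (C' ∩ {I : RIdeals r | a ∉ I.1}).Nonempty := by
      simp only [hp0, hP, mem_iInter] at ha
      push_neg at ha
      obtain ⟨I, hI, haI⟩ := ha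
      exact ⟨I, hI, haI⟩
    have hUb : (C' ∩ {I : RIdeals r | b ∉ I.1}).Nonempty := by
      simp only [hp0, hP, mem_iInter] at hb
      push_neg at hb
      obtain ⟨I, hI, hbI⟩ := hb
      exact ⟨I, hI, hbI⟩
    obtain ⟨K, hKC, hKa, hKb⟩ := hirr'.2 _ _ (isOpen_U r a) (isOpen_U r b) hUa hUb
    rcases (hprop K hKC).2 a b (hPsub hKC hab) with h | h
    · exact hKa h
    · exact hKb h
  set p : ↥(rSpecSet r) := ⟨p0, hproper, hprime⟩ with hp
  have hpcl : (p0 : RIdeals r) ∈ closure C' := by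
    rw [(basisB r).mem_closure_iff]
    rintro t ⟨f, ⟨hfin, hsub⟩, rfl⟩ hpt
    have key := isIrreducible_iff_sInter.1 hirr' hfin.toFinset ?_ ?_
    · obtain ⟨K, hK1, hK2⟩ := key
      refine ⟨K, ?_, hK1⟩
      simpa [hfin.coe_toFinset] using hK2
    · intro u hu
      rw [hfin.mem_toFinset] at hu
      obtain ⟨x, rfl⟩ := hsub hu
      exact isOpen_U r x
    · intro u hu
      rw [hfin.mem_toFinset] at hu
      have hpu := mem_sInter.1 hpt u hu
      obtain ⟨x, rfl⟩ := hsub hu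
      have hx : x ∉ P := hpu
      simp only [hP, mem_iInter] at hx
      push_neg at hx
      obtain ⟨I, hI, hxI⟩ := hx
      exact ⟨I, hI, hxI⟩
  have hpC : p ∈ C := hcl.closure_subset (closure_subtype.2 hpcl)
  refine ⟨p, ?_⟩
  show closure {p} = C
  refine eq_of_subset_of_subset (closure_minimal (singleton_subset_iff.2 hpC) hcl) ?_
  intro I hIC
  rw [closure_subtype, image_singleton, (basisB r).mem_closure_iff]
  rintro t ⟨f, ⟨hfin, hsub⟩, rfl⟩ hIt
  refine ⟨p0, ?_, mem_singleton _⟩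
  refine mem_sInter.2 fun u hu => ?_
  obtain ⟨x, rfl⟩ := hsub hu
  have hxI : x ∉ (I : RIdeals r).1 := mem_sInter.1 hIt _ hu
  exact fun hxP => hxI (hPsub ⟨I, hIC, rfl⟩ hxP)

lemma compactSpaceS : CompactSpace ↥(rSpecSet r) := by
  refine isCompact_iff_compactSpace.1 ?_
  have := isCompact_spec_sInter r hr (f := ∅) finite_empty (empty_subset _)
  simpa using this

omit hr in
lemma open_compact_eq (U : Set ↥(rSpecSet r)) (hUo : IsOpen U) (hUc : IsCompact U) :
    ∃ F : Set (Set ↥(rSpecSet r)), F.Finite ∧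
      (∀ b ∈ F, b ∈ (preimage (Subtype.val : rSpecSet r → RIdeals r)) ''
        ((fun f : Set (Set (RIdeals r)) => ⋂₀ f) '' {f : Set (Set (RIdeals r)) | f.Finite ∧ f ⊆ gen r})) ∧
      U = ⋃₀ F := by
  obtain ⟨𝒮, h𝒮, rfl⟩ := (basisS r).open_eq_sUnion hUo
  obtain ⟨F, hF𝒮, hFfin, hcov⟩ := hUc.elim_finite_subcover_image
    (fun i (hi : i ∈ 𝒮) => (basisS r).isOpen (h𝒮 hi))
    (by rw [sUnion_eq_biUnion])
  refine ⟨F, hFfin, fun b hb => h𝒮 (hF𝒮 hb), ?_⟩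
  rw [← sUnion_eq_biUnion] at hcov
  refine eq_of_subset_of_subset hcov ?_
  exact sUnion_subset_sUnion hF𝒮

omit hr in
lemma basisS_inter {b c : Set ↥(rSpecSet r)}
    (hb : b ∈ (preimage (Subtype.val : rSpecSet r → RIdeals r)) ''
      ((fun f : Set (Set (RIdeals r)) => ⋂₀ f) '' {f : Set (Set (RIdeals r)) | f.Finite ∧ f ⊆ gen r}))
    (hc : c ∈ (preimage (Subtype.val : rSpecSet r → RIdeals r)) ''
      ((fun f : Set (Set (RIdeals r)) => ⋂₀ f) '' {f : Set (Set (RIdeals r)) | f.Finite ∧ f ⊆ gen r})) :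
    b ∩ c ∈ (preimage (Subtype.val : rSpecSet r → RIdeals r)) ''
      ((fun f : Set (Set (RIdeals r)) => ⋂₀ f) '' {f : Set (Set (RIdeals r)) | f.Finite ∧ f ⊆ gen r}) := by
  obtain ⟨t, ⟨f, ⟨hfin, hsub⟩, rfl⟩, rfl⟩ := hb
  obtain ⟨t', ⟨f', ⟨hfin', hsub'⟩, rfl⟩, rfl⟩ := hc
  refine ⟨⋂₀ (f ∪ f'), ⟨f ∪ f', ⟨hfin.union hfin', union_subset hsub hsub'⟩, rfl⟩, ?_⟩
  rw [sInter_union, preimage_inter]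

lemma spectralS : IsSpectralSpace ↥(rSpecSet r) := by
  haveI := t0 r
  refine ⟨compactSpaceS r hr, inferInstance, quasiSober r, ?_, ?_⟩
  · refine isTopologicalBasis_of_isOpen_of_nhds (fun u hu => hu.1) ?_
    intro a u ha hu
    obtain ⟨v, hv, hav, hvu⟩ := (basisS r).exists_subset_of_mem_open ha hu
    exact ⟨v, ⟨(basisS r).isOpen hv, basisS_compact r hr hv⟩, hav, hvu⟩
  · intro U V hUo hUc hVo hVc
    obtain ⟨F, hFfin, hFB, rfl⟩ := open_compact_eq r U hUo hUc
    obtain ⟨G, hGfin, hGB, rfl⟩ := open_compact_eq r V hVo hVc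
    have : ⋃₀ F ∩ ⋃₀ G = ⋃ b ∈ F, ⋃ c ∈ G, b ∩ c := by
      ext x
      simp only [mem_inter_iff, mem_sUnion, mem_iUnion, mem_inter_iff, exists_prop]
      tauto
    rw [this]
    refine hFfin.isCompact_biUnion fun b hb => hGfin.isCompact_biUnion fun c hc => ?_
    exact basisS_compact r hr (basisS_inter r (hFB b hb) (hGB c hc))

end RSpecAux

theorem rSpec_proconstructible_and_spectral {H : Type*} [CommMonoidWithZero H] [IsCancelMulZero H]
    [Nontrivial H] (r : IdealSystem H) (hr : r.Finitary) :
    @IsClosed _ (constructibleTop (RIdeals r)) (rSpecSet r) ∧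
    IsSpectralSpace ↥(rSpecSet r) :=
  ⟨RSpecAux.spec_closed_constructible r hr, RSpecAux.spectralS r hr⟩
end

section
/- Let H be a cancellative commutative monoid with zero (1 ≠ 0), let r be a finitary ideal system on H, and let 𝒰 be an ultrafilter on I_r(H). Then the set I_𝒰 := {y ∈ H : U_r(y) ∉ 𝒰} is an r-ideal of H, i.e. (I_𝒰)_r = I_𝒰. -/
open Set Topology

theorem ultrafilter_limit_is_rIdeal {H : Type*} [CommMonoidWithZero H] [IsCancelMulZero H] [Nontrivial H]
    (r : IdealSystem H) (hr : r.Finitary) (𝒰 : Ultrafilter (RIdeals r)) :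
    r.toFun {y : H | {I : RIdeals r | y ∉ I.1} ∉ 𝒰} =
      {y : H | {I : RIdeals r | y ∉ I.1} ∉ 𝒰} := by
  set S : Set H := {y : H | {I : RIdeals r | y ∉ I.1} ∉ 𝒰} with hS
  have hmem : ∀ y : H, y ∈ S ↔ {I : RIdeals r | y ∈ I.1} ∈ 𝒰 := by
    intro y
    have : {I : RIdeals r | y ∈ I.1} = ({I : RIdeals r | y ∉ I.1})ᶜ := by
      ext I; simp
    rw [hS, Set.mem_setOf_eq, this, Ultrafilter.compl_mem_iff_notMem]
  apply Set.Subset.antisymm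
  · intro y hy
    rw [hr S] at hy
    simp only [Set.mem_iUnion] at hy
    obtain ⟨E, ⟨hES, hEfin⟩, hyE⟩ := hy
    rw [hmem]
    have hA : (⋂ x ∈ E, {I : RIdeals r | x ∈ I.1}) ∈ (𝒰 : Filter (RIdeals r)) :=
      (Filter.biInter_mem hEfin).mpr (fun x hx => (hmem x).mp (hES hx))
    refine Filter.mem_of_superset hA ?_
    intro I hI
    simp only [Set.mem_iInter, Set.mem_setOf_eq] at hI
    obtain ⟨X, hX⟩ := I.2
    have hEI : E ⊆ I.1 := fun x hx => hI x hx
    show y ∈ I.1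
    rw [hX] at hEI ⊢
    exact r.id2 E X hEI hyE
  · intro y hy
    exact r.id1 S (Or.inl hy)
end

section
/- Let H be a cancellative commutative monoid with zero (1 ≠ 0) with quotient groupoid G. Then the set 𝒳 of all generalized H-module systems on G, endowed with the Zariski topology, is a spectral space. -/
open Set Topology

variable (G : Type*) [CommGroupWithZero G]

/-- A generalized `H`-module system on `G`. -/
structure ModuleSystem (H : Submonoid G) where
  toFun : Set G → Set G
  id1 : ∀ A : Set G, A ∪ {0} ⊆ toFun A
  m2 : ∀ A B : Set G, A ⊆ B → toFun A ⊆ toFun B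
  id3 : ∀ (c : G) (A : Set G), (fun x => c * x) '' toFun A = toFun ((fun x => c * x) '' A)
  m4 : ∀ A : Set G, Set.image2 (· * ·) (H : Set G) (toFun A) = toFun A

/-- The Zariski topology on the set `𝒳` of all generalized `H`-module systems on `G`,
generated by the sets `U_{A,x} = {r | x ∈ A_r}`. -/
instance (H : Submonoid G) : TopologicalSpace (ModuleSystem G H) :=
  TopologicalSpace.generateFrom
    {U : Set (ModuleSystem G H) | ∃ (A : Set G) (x : G), U = {r | x ∈ r.toFun A}}

namespace ModuleSystem

variable {G} {H : Submonoid G}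

/-- The generating subbasis. -/
def gens (G : Type*) [CommGroupWithZero G] (H : Submonoid G) : Set (Set (ModuleSystem G H)) :=
  {U : Set (ModuleSystem G H) | ∃ (A : Set G) (x : G), U = {r | x ∈ r.toFun A}}

lemma isOpen_iff_generateOpen {U : Set (ModuleSystem G H)} :
    IsOpen U ↔ TopologicalSpace.GenerateOpen (gens G H) U := Iff.rfl

lemma zero_mem' (s : ModuleSystem G H) (A : Set G) : (0 : G) ∈ s.toFun A :=
  s.id1 A (Set.mem_union_right A rfl)

lemma mul_mem' (s : ModuleSystem G H) {h x : G} (hh : h ∈ H) {A : Set G}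
    (hx : x ∈ s.toFun A) : h * x ∈ s.toFun A := by
  rw [← s.m4 A]; exact Set.mem_image2_of_mem hh hx

lemma zero_mul_image {T : Set G} (hT : (0 : G) ∈ T) :
    (fun x => (0 : G) * x) '' T = {0} := by
  ext y
  simp only [Set.mem_image, Set.mem_singleton_iff]
  constructor
  · rintro ⟨x, _, rfl⟩; exact zero_mul x
  · rintro rfl; exact ⟨0, hT, zero_mul 0⟩

lemma isOpen_basic (A : Set G) (x : G) :
    IsOpen {r : ModuleSystem G H | x ∈ r.toFun A} :=
  TopologicalSpace.isOpen_generateFrom_of_mem ⟨A, x, rfl⟩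

/-- Ultrafilter limit of module systems. -/
def limSys (F : Ultrafilter (ModuleSystem G H)) : ModuleSystem G H where
  toFun A := {x | {s : ModuleSystem G H | x ∈ s.toFun A} ∈ F}
  id1 A := by
    intro x hx
    have : {s : ModuleSystem G H | x ∈ s.toFun A} = Set.univ := by
      ext s; simpa using s.id1 A hx
    simp only [Set.mem_setOf_eq, this]
    exact Filter.univ_mem
  m2 A B hAB := by
    intro x hx
    exact Filter.mem_of_superset hx fun s hs => s.m2 A B hAB hs
  id3 c A := by
    by_cases hc : c = 0
    · subst hc
      have hz : (0 : G) ∈ {x | {s : ModuleSystem G H | x ∈ s.toFun A} ∈ F} := by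
        have : {s : ModuleSystem G H | (0:G) ∈ s.toFun A} = Set.univ := by
          ext s; simpa using s.zero_mem' A
        simp only [Set.mem_setOf_eq, this]; exact Filter.univ_mem
      rw [zero_mul_image hz]
      have hs0 : ∀ s : ModuleSystem G H, s.toFun ((fun x => (0:G) * x) '' A) = {0} := by
        intro s
        rw [← s.id3, zero_mul_image (s.zero_mem' A)]
      ext y
      simp only [Set.mem_singleton_iff, Set.mem_setOf_eq, hs0]
      constructor
      · rintro rfl
        have : {s : ModuleSystem G H | (0:G) = 0} = Set.univ := by
          ext s; simp
        rw [this]; exact Filter.univ_mem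
      · intro hm
        by_contra hy
        have : {s : ModuleSystem G H | y = 0} = ∅ := by
          ext s; simp [hy]
        rw [this] at hm
        exact F.toFilter.empty_notMem hm
    · ext y
      simp only [Set.mem_image, Set.mem_setOf_eq]
      constructor
      · rintro ⟨x, hx, rfl⟩
        refine Filter.mem_of_superset hx fun s hs => ?_
        show c * x ∈ s.toFun ((fun x => c * x) '' A)
        rw [← s.id3]
        exact ⟨x, hs, rfl⟩
      · intro hy
        refine ⟨c⁻¹ * y, ?_, (mul_inv_cancel_left₀ hc y)⟩
        refine Filter.mem_of_superset hy fun s hs => ?_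
        show c⁻¹ * y ∈ s.toFun A
        have hs' : y ∈ s.toFun ((fun x => c * x) '' A) := hs
        rw [← s.id3] at hs'
        obtain ⟨x, hx, hxy⟩ := hs' 
        have : c⁻¹ * y = x := by rw [← hxy, inv_mul_cancel_left₀ hc]
        rwa [this]
  m4 A := by
    ext x
    constructor
    · rintro ⟨h, hh, y, hy, rfl⟩
      exact Filter.mem_of_superset hy fun s hs => s.mul_mem' hh hs
    · intro hx
      exact ⟨1, H.one_mem, x, hx, one_mul x⟩

lemma ultrafilter_le_nhds (F : Ultrafilter (ModuleSystem G H)) :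
    (F : Filter (ModuleSystem G H)) ≤ nhds (limSys F) := by
  refine (nhds_basis_opens (limSys F)).ge_iff.2 ?_
  rintro U ⟨hmem, hU⟩
  rw [isOpen_iff_generateOpen] at hU
  induction hU with
  | basic u hu =>
      obtain ⟨A, x, rfl⟩ := hu
      exact hmem
  | univ => exact Filter.univ_mem
  | inter u v _ _ ihu ihv => exact Filter.inter_mem (ihu hmem.1) (ihv hmem.2)
  | sUnion S _ ih =>
      obtain ⟨t, htS, hmt⟩ := hmem
      exact Filter.mem_of_superset (ih t htS hmt) (Set.subset_sUnion_of_mem htS)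

lemma isCompact_biInter (I : Set (Set G × G)) :
    IsCompact (⋂ p ∈ I, {r : ModuleSystem G H | p.2 ∈ r.toFun p.1}) := by
  rw [isCompact_iff_ultrafilter_le_nhds]
  intro F hF
  refine ⟨limSys F, ?_, ultrafilter_le_nhds F⟩
  have hS := Filter.le_principal_iff.1 hF
  simp only [Set.mem_iInter]
  intro p hp
  exact Filter.mem_of_superset hS fun s hs => by
    simpa using Set.mem_iInter₂.1 hs p hp

instance : CompactSpace (ModuleSystem G H) := by
  constructor
  have := isCompact_biInter (H := H) ∅
  simpa using this

/-- Finite intersections of subbasic opens. -/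
def IsBasic (v : Set (ModuleSystem G H)) : Prop :=
  ∃ I : Finset (Set G × G), v = ⋂ p ∈ I, {r : ModuleSystem G H | p.2 ∈ r.toFun p.1}

lemma IsBasic.isOpen {v : Set (ModuleSystem G H)} (hv : IsBasic v) : IsOpen v := by
  obtain ⟨I, rfl⟩ := hv
  exact isOpen_biInter_finset fun p _ => isOpen_basic p.1 p.2

lemma IsBasic.isCompact {v : Set (ModuleSystem G H)} (hv : IsBasic v) : IsCompact v := by
  obtain ⟨I, rfl⟩ := hv
  have := isCompact_biInter (H := H) (I : Set (Set G × G))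
  simpa using this

lemma IsBasic.inter {v w : Set (ModuleSystem G H)} (hv : IsBasic v) (hw : IsBasic w) :
    IsBasic (v ∩ w) := by
  classical
  obtain ⟨I, rfl⟩ := hv
  obtain ⟨J, rfl⟩ := hw
  refine ⟨I ∪ J, ?_⟩
  ext r
  simp only [Set.mem_inter_iff, Set.mem_iInter, Finset.mem_union]
  constructor
  · rintro ⟨h1, h2⟩ p hp
    rcases hp with hp | hp
    · exact h1 p hp
    · exact h2 p hp
  · intro h
    exact ⟨fun p hp => h p (Or.inl hp), fun p hp => h p (Or.inr hp)⟩

lemma exists_basic {U : Set (ModuleSystem G H)} (hU : IsOpen U) {a : ModuleSystem G H}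
    (ha : a ∈ U) : ∃ v, IsBasic v ∧ a ∈ v ∧ v ⊆ U := by
  rw [isOpen_iff_generateOpen] at hU
  induction hU with
  | basic u hu =>
      obtain ⟨A, x, rfl⟩ := hu
      refine ⟨_, ⟨{(A, x)}, ?_⟩, ha, le_refl _⟩
      ext r; simp
  | univ => exact ⟨Set.univ, ⟨∅, by simp⟩, trivial, le_refl _⟩
  | inter u v _ _ ihu ihv =>
      obtain ⟨v1, hb1, ha1, hs1⟩ := ihu ha.1
      obtain ⟨v2, hb2, ha2, hs2⟩ := ihv ha.2
      exact ⟨v1 ∩ v2, hb1.inter hb2, ⟨ha1, ha2⟩,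
        Set.inter_subset_inter hs1 hs2⟩
  | sUnion S _ ih =>
      obtain ⟨t, htS, hat⟩ := ha
      obtain ⟨v, hb, hav, hvs⟩ := ih t htS hat
      exact ⟨v, hb, hav, hvs.trans (Set.subset_sUnion_of_mem htS)⟩

lemma basis : TopologicalSpace.IsTopologicalBasis
    {U : Set (ModuleSystem G H) | IsOpen U ∧ IsCompact U} := by
  refine TopologicalSpace.isTopologicalBasis_of_isOpen_of_nhds (fun u hu => hu.1) ?_
  intro a u ha hu
  obtain ⟨v, hb, hav, hvu⟩ := exists_basic hu ha
  exact ⟨v, ⟨hb.isOpen, hb.isCompact⟩, hav, hvu⟩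

lemma exists_finite_basic_cover {U : Set (ModuleSystem G H)} (hU : IsOpen U)
    (hc : IsCompact U) :
    ∃ T : Finset (Set (ModuleSystem G H)), (∀ v ∈ T, IsBasic v) ∧ U = ⋃ v ∈ T, v := by
  classical
  have hcov : U ⊆ ⋃ v : {v : Set (ModuleSystem G H) // IsBasic v ∧ v ⊆ U}, v.1 := by
    intro a ha
    obtain ⟨v, hb, hav, hvu⟩ := exists_basic hU ha
    exact Set.mem_iUnion.2 ⟨⟨v, hb, hvu⟩, hav⟩
  obtain ⟨T, hT⟩ := hc.elim_finite_subcover _ (fun v => v.2.1.isOpen) hcov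
  refine ⟨T.image (fun v => v.1), fun v hv => ?_, le_antisymm ?_ ?_⟩
  · obtain ⟨w, _, rfl⟩ := Finset.mem_image.1 hv
    exact w.2.1
  · intro a ha
    have h2 := hT ha
    rw [Set.mem_iUnion₂] at h2 ⊢
    obtain ⟨v, hvT, hav⟩ := h2
    exact ⟨v.1, Finset.mem_image_of_mem _ hvT, hav⟩
  · intro a ha
    rw [Set.mem_iUnion₂] at ha
    obtain ⟨v, hv, hav⟩ := ha
    obtain ⟨w, _, rfl⟩ := Finset.mem_image.1 hv
    exact w.2.2 hav

lemma inter_compact {U V : Set (ModuleSystem G H)} (hU : IsOpen U) (hcU : IsCompact U)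
    (hV : IsOpen V) (hcV : IsCompact V) : IsCompact (U ∩ V) := by
  obtain ⟨T, hTb, rfl⟩ := exists_finite_basic_cover hU hcU
  obtain ⟨S, hSb, rfl⟩ := exists_finite_basic_cover hV hcV
  have heq : (⋃ v ∈ T, v) ∩ (⋃ w ∈ S, w)
      = ⋃ v ∈ T, ⋃ w ∈ S, (v ∩ w) := by
    ext r
    simp only [Set.mem_inter_iff, Set.mem_iUnion]
    constructor
    · rintro ⟨⟨v, hv, hrv⟩, ⟨w, hw, hrw⟩⟩
      exact ⟨v, hv, w, hw, hrv, hrw⟩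
    · rintro ⟨v, hv, w, hw, hrv, hrw⟩
      exact ⟨⟨v, hv, hrv⟩, ⟨w, hw, hrw⟩⟩
  rw [heq]
  refine T.finite_toSet.isCompact_biUnion fun v hv => ?_
  refine S.finite_toSet.isCompact_biUnion fun w hw => ?_
  exact ((hTb v hv).inter (hSb w hw)).isCompact

instance : T0Space (ModuleSystem G H) := by
  refine t0Space_iff_inseparable _ |>.2 fun r s h => ?_
  have key : ∀ (A : Set G) (x : G), x ∈ r.toFun A ↔ x ∈ s.toFun A := fun A x =>
    h.mem_open_iff (isOpen_basic A x)
  cases r with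
  | mk rf _ _ _ _ =>
    cases s with
    | mk sf _ _ _ _ =>
      simp only [mk.injEq]
      funext A; ext x; exact key A x

/-- The generic point of an irreducible closed set: pointwise union. -/
def supSys (C : Set (ModuleSystem G H)) (hC : C.Nonempty) : ModuleSystem G H where
  toFun A := ⋃ s ∈ C, s.toFun A
  id1 A := by
    obtain ⟨s, hs⟩ := hC
    exact (s.id1 A).trans
      (Set.subset_biUnion_of_mem (u := fun t : ModuleSystem G H => t.toFun A) hs)
  m2 A B hAB := Set.iUnion₂_mono fun s _ => s.m2 A B hAB
  id3 c A := by
    rw [Set.image_iUnion₂]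
    exact Set.iUnion₂_congr fun s _ => s.id3 c A
  m4 A := by
    ext x
    constructor
    · rintro ⟨h, hh, y, hy, rfl⟩
      obtain ⟨s, hs, hys⟩ := Set.mem_iUnion₂.1 hy
      exact Set.mem_iUnion₂.2 ⟨s, hs, s.mul_mem' hh hys⟩
    · intro hx
      exact ⟨1, H.one_mem, x, hx, one_mul x⟩

instance : QuasiSober (ModuleSystem G H) := by
  constructor
  intro C hirr hcl
  have hC : C.Nonempty := hirr.1
  refine ⟨supSys C hC, ?_⟩
  have hmem : supSys C hC ∈ C := by
    by_contra hg
    have hopen : IsOpen Cᶜ := hcl.isOpen_compl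
    -- every open set containing supSys meets C
    have key : ∀ U : Set (ModuleSystem G H), IsOpen U → supSys C hC ∈ U →
        (C ∩ U).Nonempty := by
      intro U hU
      rw [isOpen_iff_generateOpen] at hU
      induction hU with
      | basic u hu =>
          intro hmem
          obtain ⟨A, x, rfl⟩ := hu
          obtain ⟨s, hs, hxs⟩ := Set.mem_iUnion₂.1 hmem
          exact ⟨s, hs, hxs⟩
      | univ => intro _; simpa using hC
      | inter u v hu hv ihu ihv =>
          intro hmem
          exact hirr.2 u v hu hv (ihu hmem.1) (ihv hmem.2)
      | sUnion S hS ih =>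
          intro hmem
          obtain ⟨t, htS, hmt⟩ := hmem
          obtain ⟨s, hs, hst⟩ := ih t htS hmt
          exact ⟨s, hs, Set.subset_sUnion_of_mem htS hst⟩
    obtain ⟨s, hsC, hsc⟩ := key Cᶜ hopen hg
    exact hsc hsC
  refine le_antisymm (closure_minimal (Set.singleton_subset_iff.2 hmem) hcl) ?_
  intro s hs
  rw [mem_closure_iff]
  intro o ho hso
  refine ⟨supSys C hC, ?_, rfl⟩
  -- every open set containing s contains supSys
  rw [isOpen_iff_generateOpen] at ho
  clear hmem
  induction ho with
  | basic u hu =>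
      obtain ⟨A, x, rfl⟩ := hu
      exact Set.mem_iUnion₂.2 ⟨s, hs, hso⟩
  | univ => trivial
  | inter u v _ _ ihu ihv => exact ⟨ihu hso.1, ihv hso.2⟩
  | sUnion S _ ih =>
      obtain ⟨t, htS, hst⟩ := hso
      exact Set.subset_sUnion_of_mem htS (ih t htS hst)

end ModuleSystem

theorem moduleSystems_is_spectral (H : Submonoid G) (h0 : (0 : G) ∈ H)
    (hq : IsQuotientGroupoid G H) :
    IsSpectralSpace (ModuleSystem G H) :=
  ⟨inferInstance, inferInstance, inferInstance, ModuleSystem.basis,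
    fun _ _ hU hcU hV hcV => ModuleSystem.inter_compact hU hcU hV hcV⟩
end

section
/- Let H be a cancellative commutative monoid with zero (1 ≠ 0) with quotient groupoid G, and let 𝒰 be an ultrafilter on 𝒳. Then the map r_𝒰 : 𝒫(G) → 𝒫(G) defined by A ↦ {g ∈ G : U_{A,g} ∈ 𝒰} is a generalized H-module system on G, and for every A ⊆ G and x ∈ G one has r_𝒰 ∈ U_{A,x} if and only if U_{A,x} ∈ 𝒰. -/
open Set Topology

variable (G : Type*) [CommGroupWithZero G]

theorem ultrafilter_limit_is_moduleSystem (H : Submonoid G) (h0 : (0 : G) ∈ H)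
    (hq : IsQuotientGroupoid G H) (𝒰 : Ultrafilter (ModuleSystem G H)) :
    ∃ r : ModuleSystem G H, ∀ (A : Set G) (x : G),
      x ∈ r.toFun A ↔ {s : ModuleSystem G H | x ∈ s.toFun A} ∈ 𝒰 := by
  refine ⟨⟨fun A => {x | {s : ModuleSystem G H | x ∈ s.toFun A} ∈ 𝒰}, ?_, ?_, ?_, ?_⟩,
    fun A x => Iff.rfl⟩
  · intro A x hx
    exact Filter.univ_mem' fun s => s.id1 A hx
  · intro A B hAB x hx
    exact Filter.mem_of_superset hx fun s hs => s.m2 A B hAB hs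
  · intro c A
    rcases eq_or_ne c 0 with rfl | hc
    · ext x
      constructor
      · rintro ⟨y, hy, rfl⟩
        simp only [zero_mul, Set.mem_setOf_eq]
        exact Filter.univ_mem' fun s => s.id1 _ (Or.inr rfl)
      · intro hx
        have hx0 : x = 0 := by
          by_contra hne
          have hempty : {s : ModuleSystem G H |
              x ∈ s.toFun ((fun y => (0 : G) * y) '' A)} = ∅ := by
            ext s
            simp only [Set.mem_setOf_eq, Set.mem_empty_iff_false, iff_false]
            intro hxs
            rw [← s.id3 0 A] at hxs
            rcases hxs with ⟨y, _, rfl⟩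
            exact hne (zero_mul y)
          rw [Set.mem_setOf_eq, hempty] at hx
          exact (Filter.empty_notMem (𝒰 : Filter (ModuleSystem G H))) hx
        subst hx0
        exact ⟨0, Filter.univ_mem' fun s => s.id1 A (Or.inr rfl), zero_mul 0⟩
    · have key : ∀ (x : G) (s : ModuleSystem G H),
          x ∈ s.toFun ((fun y => c * y) '' A) ↔ c⁻¹ * x ∈ s.toFun A := by
        intro x s
        rw [← s.id3]
        constructor
        · rintro ⟨y, hy, rfl⟩
          rwa [inv_mul_cancel_left₀ hc]
        · intro hy
          exact ⟨c⁻¹ * x, hy, mul_inv_cancel_left₀ hc x⟩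
      ext x
      constructor
      · rintro ⟨y, hy, rfl⟩
        show {s : ModuleSystem G H | c * y ∈ s.toFun _} ∈ 𝒰
        refine Filter.mem_of_superset hy fun s hs => ?_
        show c * y ∈ s.toFun _
        rw [key]
        rwa [inv_mul_cancel_left₀ hc]
      · intro hx
        refine ⟨c⁻¹ * x, ?_, mul_inv_cancel_left₀ hc x⟩
        refine Filter.mem_of_superset hx fun s hs => ?_
        exact (key x s).mp hs
  · intro A
    ext x
    constructor
    · rintro ⟨h, hh, y, hy, rfl⟩
      refine Filter.mem_of_superset hy fun s hs => ?_
      show h * y ∈ s.toFun A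
      rw [← s.m4 A]
      exact ⟨h, hh, y, hs, rfl⟩
    · intro hx
      exact ⟨1, H.one_mem, x, hx, one_mul x⟩
end

section
/- Let H be a cancellative commutative monoid with zero (1 ≠ 0) with quotient groupoid G. For every A ⊆ G and x ∈ G, the set U_{A,x} = {r ∈ 𝒳 : x ∈ A_r} is a quasi-compact subset of 𝒳 with the Zariski topology. -/
open Set Topology

variable (G : Type*) [CommGroupWithZero G]

variable {G}

lemma ModuleSystem.zero_mem {H : Submonoid G} (r : ModuleSystem G H) (A : Set G) :
    (0 : G) ∈ r.toFun A := r.id1 A (Or.inr rfl)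

lemma ModuleSystem.toFun_zero_image {H : Submonoid G} (r : ModuleSystem G H) (A : Set G) :
    r.toFun ((fun y => (0 : G) * y) '' A) = {0} := by
  rw [← r.id3 0 A]
  ext z
  constructor
  · rintro ⟨y, -, rfl⟩; simp
  · rintro rfl; exact ⟨0, r.zero_mem A, by simp⟩

/-- The infimum (set-wise intersection) of a nonempty family of module systems. -/
noncomputable def ModuleSystem.inter {H : Submonoid G} (S : Set (ModuleSystem G H))
    (hS : S.Nonempty) : ModuleSystem G H where
  toFun B := ⋂ r ∈ S, r.toFun B
  id1 A := by
    intro y hy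
    exact mem_iInter₂.2 fun r _ => r.id1 A hy
  m2 A B hAB := by
    intro y hy
    exact mem_iInter₂.2 fun r hr => r.m2 A B hAB (mem_iInter₂.1 hy r hr)
  id3 c A := by
    rcases eq_or_ne c 0 with rfl | hc
    · have h1 : (fun x => (0 : G) * x) '' (⋂ r ∈ S, r.toFun A) = {0} := by
        ext z
        constructor
        · rintro ⟨y, -, rfl⟩; simp
        · rintro rfl
          exact ⟨0, mem_iInter₂.2 fun r _ => r.zero_mem A, by simp⟩
      rw [h1]
      ext z
      simp only [mem_iInter]
      constructor
      · rintro rfl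
        intro r hr
        rw [r.toFun_zero_image]
        rfl
      · intro hz
        obtain ⟨r, hr⟩ := hS
        have := hz r hr
        rwa [r.toFun_zero_image] at this
    · have hbij : Function.Bijective (fun x : G => c * x) := mulLeft_bijective₀ c hc
      rw [Set.image_iInter₂ hbij]
      exact iInter₂_congr fun r _ => r.id3 c A
  m4 A := by
    apply Subset.antisymm
    · rintro z ⟨a, ha, y, hy, rfl⟩
      refine mem_iInter₂.2 fun r hr => ?_
      rw [← r.m4 A]
      exact ⟨a, ha, y, mem_iInter₂.1 hy r hr, rfl⟩
    · intro y hy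
      exact ⟨1, H.one_mem, y, hy, one_mul y⟩

theorem subbasic_open_is_compact (H : Submonoid G) (h0 : (0 : G) ∈ H)
    (hq : IsQuotientGroupoid G H) (A : Set G) (x : G) :
    IsCompact {r : ModuleSystem G H | x ∈ r.toFun A} := by
  set K := {r : ModuleSystem G H | x ∈ r.toFun A} with hKdef
  rcases K.eq_empty_or_nonempty with hK | hK
  · rw [hK]; exact isCompact_empty
  · rw [isCompact_iff_finite_subcover]
    intro ι U hU hcover
    set s := ModuleSystem.inter K hK with hs
    have hsK : s ∈ K := by
      show x ∈ ⋂ r ∈ K, r.toFun A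
      exact mem_iInter₂.2 fun r hr => hr
    -- every r ∈ K refines s on every set
    have hrefine : ∀ (B : Set G) (y : G), y ∈ s.toFun B → ∀ r ∈ K, y ∈ r.toFun B := by
      intro B y hy r hr
      exact mem_iInter₂.1 hy r hr
    obtain ⟨i, hi⟩ := mem_iUnion.1 (hcover hsK)
    refine ⟨{i}, fun r hr => ?_⟩
    have hbasis :=
      TopologicalSpace.isTopologicalBasis_of_subbasis
        (s := {U : Set (ModuleSystem G H) | ∃ (A : Set G) (x : G), U = {r | x ∈ r.toFun A}})
        rfl
    obtain ⟨V, ⟨F, ⟨hFfin, hFsub⟩, rfl⟩, hsV, hVU⟩ :=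
      hbasis.exists_subset_of_mem_open hi (hU i)
    have hrV : r ∈ ⋂₀ F := by
      refine Set.mem_sInter.2 fun W hW => ?_
      obtain ⟨B, y, rfl⟩ := hFsub hW
      exact hrefine B y (Set.mem_sInter.1 hsV _ hW) r hr
    simpa using hVU hrV
end

section
/- Let H be a cancellative commutative monoid with zero (1 ≠ 0) with quotient groupoid G, and let Δ ⊆ R(G|H) be any subset of the set of overmonoids of H. Then Δ is quasi-compact in the subspace topology induced from R(G|H) if and only if the map r_Δ : A ↦ ⋂_{S ∈ Δ} S·A is finitary, i.e. ⋂_{S ∈ Δ} S·A = ⋃{⋂_{S ∈ Δ} S·E : E a finite subset of A} for every A ⊆ G. -/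
open Set Topology

variable (G : Type*) [CommGroupWithZero G]

/-- The set `R(G|H)` of all overmonoids of `H` in `G`. -/
def Overmonoids (H : Submonoid G) : Type _ :=
  {S : Submonoid G // H ≤ S}

/-- The Zariski topology on `R(G|H)`, generated by the sets `U(x) = {S | x ∈ S}`. -/
instance (H : Submonoid G) : TopologicalSpace (Overmonoids G H) :=
  TopologicalSpace.generateFrom
    {U : Set (Overmonoids G H) | ∃ x : G, U = {S | x ∈ S.1}}

theorem compact_iff_finitary (H : Submonoid G) (h0 : (0 : G) ∈ H)
    (hq : IsQuotientGroupoid G H) (Δ : Set (Overmonoids G H)) :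
    IsCompact Δ ↔
      ∀ A : Set G,
        (⋂ S ∈ Δ, Set.image2 (· * ·) (S.1 : Set G) A) =
          ⋃ E ∈ {E : Set G | E ⊆ A ∧ E.Finite},
            ⋂ S ∈ Δ, Set.image2 (· * ·) (S.1 : Set G) E := by
  constructor
  · -- compact → finitary
    intro hcomp A
    apply Set.Subset.antisymm
    · intro x hx
      rcases Set.eq_empty_or_nonempty Δ with hΔ | ⟨S₀, hS₀⟩
      · refine Set.mem_biUnion (x := (∅ : Set G)) ⟨Set.empty_subset A, Set.finite_empty⟩ ?_
        simp [hΔ]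
      by_cases hx0 : x = 0
      · -- x = 0: pick any a ∈ A (which exists), E = {a}
        have h₀ := Set.mem_iInter₂.1 hx S₀ hS₀
        rcases Set.mem_image2.1 h₀ with ⟨s, hs, a, haA, hsa⟩
        refine Set.mem_biUnion (x := ({a} : Set G))
          ⟨Set.singleton_subset_iff.2 haA, Set.finite_singleton a⟩ ?_
        refine Set.mem_iInter₂.2 fun S hS => Set.mem_image2.2 ⟨0, S.2 h0, a, rfl, ?_⟩
        rw [zero_mul]; exact hx0.symm
      · -- x ≠ 0: cover Δ by U(x * a⁻¹), a ∈ A, a ≠ 0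
        set A' : Set G := {a | a ∈ A ∧ a ≠ 0} with hA'
        set cov : A' → Set (Overmonoids G H) :=
          fun a => {T | x * (a : G)⁻¹ ∈ T.1} with hcov
        have hopen : ∀ a : A', IsOpen (cov a) := fun a =>
          TopologicalSpace.isOpen_generateFrom_of_mem ⟨x * (a : G)⁻¹, rfl⟩
        have hsub : Δ ⊆ ⋃ a : A', cov a := by
          intro S hS
          have h₁ := Set.mem_iInter₂.1 hx S hS
          rcases Set.mem_image2.1 h₁ with ⟨s, hs, a, haA, hsa⟩
          have ha0 : a ≠ 0 := by rintro rfl; exact hx0 (by rw [← hsa, mul_zero])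
          refine Set.mem_iUnion.2 ⟨⟨a, haA, ha0⟩, ?_⟩
          have : s = x * a⁻¹ := (eq_mul_inv_iff_mul_eq₀ ha0).2 hsa
          simpa [hcov, ← this] using hs
        obtain ⟨t, ht⟩ := hcomp.elim_finite_subcover cov hopen hsub
        refine Set.mem_biUnion (x := (Subtype.val '' (t : Set A') : Set G))
          ⟨?_, (t.finite_toSet).image _⟩ ?_
        · rintro y ⟨a, _, rfl⟩; exact a.2.1
        refine Set.mem_iInter₂.2 fun S hS => ?_
        rcases Set.mem_iUnion₂.1 (ht hS) with ⟨a, hat, haS⟩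
        refine Set.mem_image2.2 ⟨x * (a : G)⁻¹, haS, a, ⟨a, hat, rfl⟩, ?_⟩
        rw [mul_assoc, inv_mul_cancel₀ a.2.2, mul_one]
    · -- trivial inclusion
      intro x hx
      rcases Set.mem_iUnion₂.1 hx with ⟨E, ⟨hEA, _⟩, hxE⟩
      exact Set.mem_iInter₂.2 fun S hS =>
        Set.image2_subset (Set.Subset.refl _) hEA (Set.mem_iInter₂.1 hxE S hS)
  · -- finitary → compact, via ultrafilters
    intro hfin
    rw [isCompact_iff_ultrafilter_le_nhds]
    intro F hF
    have hΔF : Δ ∈ F := Filter.le_principal_iff.1 hF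
    by_cases hp : ∃ p ∈ Δ, ∀ x ∈ p.1, {T : Overmonoids G H | x ∈ T.1} ∈ F
    · obtain ⟨p, hpΔ, hpF⟩ := hp
      refine ⟨p, hpΔ, ?_⟩
      have hn : (𝓝 p : Filter (Overmonoids G H)) =
          ⨅ s ∈ {s | p ∈ s ∧
            s ∈ {U : Set (Overmonoids G H) | ∃ x : G, U = {S | x ∈ S.1}}},
              Filter.principal s :=
        TopologicalSpace.nhds_generateFrom
      rw [hn]
      refine le_iInf₂ fun s hs => Filter.le_principal_iff.2 ?_
      obtain ⟨hps, x, rfl⟩ := hs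
      exact hpF x hps
    · exfalso
      push_neg at hp
      set X : Set G := {x | x ≠ 0 ∧ {T : Overmonoids G H | x ∈ T.1} ∉ F} with hX
      set A : Set G := (fun x => x⁻¹) '' X with hA
      have h1 : (1 : G) ∈ ⋂ S ∈ Δ, Set.image2 (· * ·) (S.1 : Set G) A := by
        refine Set.mem_iInter₂.2 fun S hS => ?_
        obtain ⟨x, hxS, hxF⟩ := hp S hS
        have hx0 : x ≠ 0 := by
          rintro rfl
          exact hxF (Filter.mem_of_superset Filter.univ_mem
            (fun T _ => T.2 h0))
        exact Set.mem_image2.2 ⟨x, hxS, x⁻¹, ⟨x, ⟨hx0, hxF⟩, rfl⟩,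
          mul_inv_cancel₀ hx0⟩
      rw [hfin A] at h1
      rcases Set.mem_iUnion₂.1 h1 with ⟨E, ⟨hEA, hEfin⟩, h1E⟩
      have hcover : Δ ⊆ ⋃ y ∈ E, {T : Overmonoids G H | y⁻¹ ∈ T.1} := by
        intro S hS
        rcases Set.mem_image2.1 (Set.mem_iInter₂.1 h1E S hS) with ⟨s, hs, y, hyE, hsy⟩
        rcases hEA hyE with ⟨x, hxX, rfl⟩
        have hx0 : x ≠ 0 := hxX.1
        have hsx : s = x := (mul_inv_eq_one₀ hx0).1 hsy
        exact Set.mem_iUnion₂.2 ⟨x⁻¹, hyE, by rw [Set.mem_setOf_eq, inv_inv, ← hsx]; exact hs⟩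
      have hUE : (⋃ y ∈ E, {T : Overmonoids G H | y⁻¹ ∈ T.1}) ∈ F :=
        Filter.mem_of_superset hΔF hcover
      rcases (Ultrafilter.finite_biUnion_mem_iff hEfin).1 hUE with ⟨y, hyE, hyF⟩
      rcases hEA hyE with ⟨x, hxX, rfl⟩
      rw [inv_inv] at hyF
      exact hxX.2 hyF
end

section
/- Let H be a cancellative commutative monoid with zero (1 ≠ 0) with quotient groupoid G, and let Δ = {H_P : P ∈ s-spec(H)} be the collection of localizations of H at its prime s-ideals. Then r_Δ is finitary: for every A ⊆ G, ⋂_{S ∈ Δ} S·A = ⋃{⋂_{S ∈ Δ} S·E : E a finite subset of A}. -/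
open Set Topology

variable (G : Type*) [CommGroupWithZero G]

/-- The localization of `H` at (the complement of) a prime `s`-ideal `P`:
`H_P = {a * s⁻¹ : a ∈ H, s ∈ H \\ P}`. -/
def sLocalization (H : Submonoid G) (P : Set G) : Set G :=
  {g : G | ∃ a ∈ H, ∃ s ∈ H, s ∉ P ∧ g = a * s⁻¹}

/-- The set of non-units of `H` is a prime `s`-ideal. -/
lemma maxSIdeal_isPrime (H : Submonoid G) (h0 : (0 : G) ∈ H) :
    IsPrimeSIdeal G H {h : G | h ∈ H ∧ ¬∃ h' ∈ H, h * h' = 1} := by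
  refine ⟨fun h hh => hh.1, ?_, ⟨h0, ?_⟩, ?_, ?_⟩
  · intro heq
    have h1 : (1 : G) ∈ ({h : G | h ∈ H ∧ ¬∃ h' ∈ H, h * h' = 1} : Set G) := by
      rw [heq]; exact H.one_mem
    exact h1.2 ⟨1, H.one_mem, one_mul 1⟩
  · rintro ⟨h', -, hh'⟩
    rw [zero_mul] at hh'
    exact zero_ne_one hh'
  · rintro p ⟨hpH, hp⟩ h hh
    refine ⟨H.mul_mem hpH hh, ?_⟩
    rintro ⟨k, hk, hpk⟩
    exact hp ⟨h * k, H.mul_mem hh hk, by rw [← mul_assoc]; exact hpk⟩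
  · intro a ha b hb hab
    by_cases hua : ∃ a' ∈ H, a * a' = 1
    · by_cases hub : ∃ b' ∈ H, b * b' = 1
      · obtain ⟨a', ha', haa'⟩ := hua
        obtain ⟨b', hb', hbb'⟩ := hub
        exact absurd ⟨a' * b', H.mul_mem ha' hb', by
          rw [mul_mul_mul_comm a b a' b', haa', hbb', one_mul]⟩ hab.2
      · exact Or.inr ⟨hb, hub⟩
    · exact Or.inl ⟨ha, hua⟩

/-- A unit of `H` lies in no prime `s`-ideal. -/
lemma unit_not_mem_prime (H : Submonoid G) {P : Set G} (hP : IsPrimeSIdeal G H P)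
    {s s' : G} (hs' : s' ∈ H) (hss' : s * s' = 1) : s ∉ P := by
  intro hsP
  obtain ⟨hsub, hne, -, hideal, -⟩ := hP
  have h1 : (1 : G) ∈ P := hss' ▸ hideal s hsP s' hs'
  refine hne (Set.Subset.antisymm hsub fun h hh => ?_)
  have := hideal 1 h1 h hh
  rwa [one_mul] at this

theorem rDelta_localizations_finitary (H : Submonoid G) (h0 : (0 : G) ∈ H)
    (hq : IsQuotientGroupoid G H) (A : Set G) :
    (⋂ P : sSpec G H, Set.image2 (· * ·) (sLocalization G H P.1) A) =
      ⋃ E ∈ {E : Set G | E ⊆ A ∧ E.Finite},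
        ⋂ P : sSpec G H, Set.image2 (· * ·) (sLocalization G H P.1) E := by
  ext x
  simp only [Set.mem_iInter, Set.mem_iUnion, Set.mem_setOf_eq]
  constructor
  · intro hx
    have hM : IsPrimeSIdeal G H {h : G | h ∈ H ∧ ¬∃ h' ∈ H, h * h' = 1} :=
      maxSIdeal_isPrime G H h0
    obtain ⟨g, hg, y, hy, hxy⟩ := hx ⟨_, hM⟩
    obtain ⟨a, ha, s, hs, hsM, rfl⟩ := hg
    simp only [Set.mem_setOf_eq, not_and, not_not] at hsM
    obtain ⟨s', hs', hss'⟩ := hsM hs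
    refine ⟨{y}, ⟨Set.singleton_subset_iff.2 hy, Set.finite_singleton y⟩, fun P => ?_⟩
    exact ⟨a * s⁻¹, ⟨a, ha, s, hs, unit_not_mem_prime G H P.2 hs' hss', rfl⟩,
      y, Set.mem_singleton y, hxy⟩
  · rintro ⟨E, ⟨hEA, -⟩, hE⟩ P
    exact Set.image2_subset Set.Subset.rfl hEA (hE P)
end

section
/- Let H be a cancellative commutative monoid with zero (1 ≠ 0) with quotient groupoid G, and let Δ = Zar(G|H) be the set of all valuation submonoids of G containing H. Then r_Δ is finitary: for every A ⊆ G, ⋂_{S ∈ Δ} S·A = ⋃{⋂_{S ∈ Δ} S·E : E a finite subset of A}. -/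
open Set Topology

variable (G : Type*) [CommGroupWithZero G]

theorem rDelta_zar_finitary (H : Submonoid G) (h0 : (0 : G) ∈ H)
    (hq : IsQuotientGroupoid G H) (A : Set G) :
    (⋂ V : Zar G H, Set.image2 (· * ·) (V.1 : Set G) A) =
      ⋃ E ∈ {E : Set G | E ⊆ A ∧ E.Finite},
        ⋂ V : Zar G H, Set.image2 (· * ·) (V.1 : Set G) E := by
  classical
  apply subset_antisymm
  · intro g hg
    by_contra hng
    simp only [mem_iUnion, mem_iInter, mem_setOf_eq, not_exists, not_forall] at hng
    have hch : ∀ E : Finset A, ∃ V : Zar G H,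
        g ∉ Set.image2 (· * ·) (V.1 : Set G) (Subtype.val '' (E : Set A)) := by
      intro E
      obtain ⟨V, hV⟩ := hng (Subtype.val '' (E : Set A))
        ⟨by rintro x ⟨y, -, rfl⟩; exact y.2, E.finite_toSet.image _⟩
      exact ⟨V, hV⟩
    choose V hV using hch
    haveI : Nonempty (Finset A) := ⟨∅⟩
    let 𝒰 : Ultrafilter (Finset A) := Ultrafilter.of Filter.atTop
    let W : Submonoid G :=
      { carrier := {x | ∀ᶠ E in (𝒰 : Filter (Finset A)), x ∈ (V E).1}
        one_mem' := Filter.Eventually.of_forall fun E => (V E).1.one_mem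
        mul_mem' := fun ha hb => (ha.and hb).mono fun E h => (V E).1.mul_mem h.1 h.2 }
    have hWval : IsValSubmonoid G W ∧ H ≤ W := by
      refine ⟨⟨Filter.Eventually.of_forall fun E => (V E).2.1.1, fun x hx => ?_⟩,
        fun h hh => Filter.Eventually.of_forall fun E => (V E).2.2 hh⟩
      exact Ultrafilter.eventually_or.mp
        (Filter.Eventually.of_forall fun E => (V E).2.1.2 x hx)
    have hmem : g ∈ Set.image2 (· * ·) ((⟨W, hWval⟩ : Zar G H).1 : Set G) A :=
      mem_iInter.mp hg ⟨W, hWval⟩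
    obtain ⟨w, hw, a, ha, hwa⟩ := hmem
    have hS1 : {E : Finset A | w ∈ (V E).1} ∈ 𝒰 := hw
    have hS2 : {E : Finset A | (⟨a, ha⟩ : A) ∈ E} ∈ 𝒰 := by
      refine Ultrafilter.of_le Filter.atTop ?_
      exact Filter.mem_atTop_sets.mpr ⟨{⟨a, ha⟩}, fun E hE =>
        Finset.mem_of_subset hE (Finset.mem_singleton_self _)⟩
    obtain ⟨E, hE1, hE2⟩ := Filter.nonempty_of_mem (Filter.inter_mem hS1 hS2)
    exact hV E ⟨w, hE1, a, ⟨⟨a, ha⟩, hE2, rfl⟩, hwa⟩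
  · intro g hg
    obtain ⟨E, hE, hgE⟩ := mem_iUnion₂.mp hg
    exact mem_iInter.mpr fun V =>
      Set.image2_subset_left hE.1 (mem_iInter.mp hgE V)
end

section
/- Let H be a cancellative commutative monoid with zero (1 ≠ 0) with quotient groupoid G. The natural map ι : R(G|H) → 𝒳 sending an overmonoid S to the generalized H-module system r_{{S}} : A ↦ S·A is a topological embedding: it is injective, continuous, and a homeomorphism onto its image, where R(G|H) and 𝒳 carry their Zariski topologies. -/
open Set Topology

variable (G : Type*) [CommGroupWithZero G]

section Aux
variable {G}

def mkSys (H : Submonoid G) (S : Overmonoids G H) : ModuleSystem G H where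
  toFun A := Set.image2 (· * ·) (S.1 : Set G) (A ∪ {0})
  id1 A := fun x hx => ⟨1, S.1.one_mem, x, hx, one_mul x⟩
  m2 A B hAB := Set.image2_subset Set.Subset.rfl (Set.union_subset_union_left _ hAB)
  id3 c A := by
    ext x
    simp only [Set.mem_image, Set.mem_image2, Set.mem_union, Set.mem_singleton_iff]
    constructor
    · rintro ⟨y, ⟨s, hs, a, ha, rfl⟩, rfl⟩
      rcases ha with ha | rfl
      · exact ⟨s, hs, c * a, Or.inl ⟨a, ha, rfl⟩, mul_left_comm s c a⟩
      · exact ⟨s, hs, 0, Or.inr rfl, by simp⟩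
    · rintro ⟨s, hs, a, ha, rfl⟩
      rcases ha with ⟨b, hb, rfl⟩ | rfl
      · exact ⟨s * b, ⟨s, hs, b, Or.inl hb, rfl⟩, mul_left_comm c s b⟩
      · exact ⟨s * 0, ⟨s, hs, 0, Or.inr rfl, rfl⟩, by simp⟩
  m4 A := by
    ext x
    simp only [Set.mem_image2]
    constructor
    · rintro ⟨h, hh, y, ⟨s, hs, a, ha, rfl⟩, rfl⟩
      exact ⟨h * s, S.1.mul_mem (S.2 hh) hs, a, ha, mul_assoc h s a⟩
    · rintro ⟨s, hs, a, ha, rfl⟩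
      exact ⟨1, H.one_mem, _, ⟨s, hs, a, ha, rfl⟩, one_mul _⟩

lemma mkSys_one (H : Submonoid G) (h0 : (0 : G) ∈ H) (S : Overmonoids G H) :
    (mkSys H S).toFun {1} = (S.1 : Set G) := by
  ext x
  show x ∈ Set.image2 (· * ·) (S.1 : Set G) ({1} ∪ {0}) ↔ _
  constructor
  · rintro ⟨s, hs, a, ha, rfl⟩
    rcases ha with rfl | rfl
    · simpa using hs
    · simpa using S.2 h0
  · intro hx
    exact ⟨x, hx, 1, Or.inl rfl, mul_one x⟩

lemma mkSys_nonempty (H : Submonoid G) (h0 : (0 : G) ∈ H) (S : Overmonoids G H)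
    (A : Set G) (hA : A.Nonempty) :
    (mkSys H S).toFun A = Set.image2 (· * ·) (S.1 : Set G) A := by
  show Set.image2 (· * ·) (S.1 : Set G) (A ∪ {0}) = _
  apply Set.Subset.antisymm
  · rintro x ⟨s, hs, a, ha, rfl⟩
    rcases ha with ha | rfl
    · exact ⟨s, hs, a, ha, rfl⟩
    · obtain ⟨a₀, ha₀⟩ := hA
      exact ⟨0, S.2 h0, a₀, ha₀, by simp⟩
  · exact Set.image2_subset Set.Subset.rfl Set.subset_union_left

end Aux

theorem overmonoids_embed_in_moduleSystems (H : Submonoid G) (h0 : (0 : G) ∈ H)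
    (hq : IsQuotientGroupoid G H) :
    ∃ ι : Overmonoids G H → ModuleSystem G H,
      (∀ (S : Overmonoids G H) (A : Set G), A.Nonempty →
        (ι S).toFun A = Set.image2 (· * ·) (S.1 : Set G) A) ∧
      Function.Injective ι ∧ IsEmbedding ι := by
  refine ⟨mkSys H, fun S A hA => mkSys_nonempty H h0 S A hA, ?_, ?_⟩
  · -- injective
    intro S S' h
    have h1 : (S.1 : Set G) = (S'.1 : Set G) := by
      rw [← mkSys_one H h0 S, ← mkSys_one H h0 S', h]
    exact Subtype.ext (SetLike.coe_injective h1)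
  · have hinj : Function.Injective (mkSys H) := by
      intro S S' h
      have h1 : (S.1 : Set G) = (S'.1 : Set G) := by
        rw [← mkSys_one H h0 S, ← mkSys_one H h0 S', h]
      exact Subtype.ext (SetLike.coe_injective h1)
    refine ⟨⟨le_antisymm ?_ ?_⟩, hinj⟩
    · -- instOver ≤ induced, i.e. continuity
      rw [← continuous_iff_le_induced]
      apply continuous_generateFrom_iff.mpr
      rintro U ⟨A, x, rfl⟩
      have heq : (mkSys H) ⁻¹' {r | x ∈ r.toFun A} =
          ⋃ a ∈ (A ∪ {0} : Set G), {S : Overmonoids G H | ∃ s ∈ S.1, s * a = x} := by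
        ext S
        show x ∈ Set.image2 (· * ·) (S.1 : Set G) (A ∪ {0}) ↔ _
        simp only [Set.mem_image2, Set.mem_iUnion, Set.mem_setOf_eq]
        constructor
        · rintro ⟨s, hs, a, ha, h⟩
          exact ⟨a, ha, s, hs, h⟩
        · rintro ⟨a, ha, s, hs, h⟩
          exact ⟨s, hs, a, ha, h⟩
      rw [heq]
      apply isOpen_biUnion
      intro a ha
      by_cases ha0 : a = 0
      · subst ha0
        by_cases hx : x = 0
        · subst hx
          have : {S : Overmonoids G H | ∃ s ∈ S.1, s * 0 = 0} = Set.univ := by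
            ext S
            simp only [Set.mem_setOf_eq, Set.mem_univ, iff_true]
            exact ⟨1, S.1.one_mem, mul_zero 1⟩
          rw [this]; exact isOpen_univ
        · have : {S : Overmonoids G H | ∃ s ∈ S.1, s * 0 = x} = ∅ := by
            ext S
            simp only [Set.mem_setOf_eq, Set.mem_empty_iff_false, iff_false]
            rintro ⟨s, hs, h⟩
            exact hx (by rw [← h, mul_zero])
          rw [this]; exact isOpen_empty
      · have : {S : Overmonoids G H | ∃ s ∈ S.1, s * a = x} =
            {S : Overmonoids G H | x * a⁻¹ ∈ S.1} := by
          ext S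
          simp only [Set.mem_setOf_eq]
          constructor
          · rintro ⟨s, hs, rfl⟩
            rwa [mul_assoc, mul_inv_cancel₀ ha0, mul_one]
          · intro hs
            exact ⟨x * a⁻¹, hs, by rw [mul_assoc, inv_mul_cancel₀ ha0, mul_one]⟩
        rw [this]
        exact TopologicalSpace.isOpen_generateFrom_of_mem ⟨x * a⁻¹, rfl⟩
    · -- induced ≤ instOver
      apply le_generateFrom
      rintro U ⟨x, rfl⟩
      have : {S : Overmonoids G H | x ∈ S.1} =
          (mkSys H) ⁻¹' {r | x ∈ r.toFun {1}} := by
        ext S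
        simp only [Set.mem_preimage, Set.mem_setOf_eq, mkSys_one H h0, SetLike.mem_coe]
      rw [this]
      exact isOpen_induced (TopologicalSpace.isOpen_generateFrom_of_mem ⟨{1}, x, rfl⟩)
end
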